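/- arXiv:2207.08116 — 4 statements merged into one kernel-verified Lean document; each statement's English description precedes it below -/
import Mathlib

section
/- Let n and m be positive integers, and let A be an n × m matrix with complex entries such that the sum of the entries in each column equals n and the sum of the entries in each row equals m. Then the support of A has size at least n + m − gcd(n, m). -/
open SimpleGraph Finset in
/-- An n × m complex matrix whose column sums all equal n and whose
row sums all equal m has support of size at least n + m − gcd(n, m). -/
theorem support_lower_bound_complex (n m : ℕ) (hn : 0 < n) (hm : 0 < m)
    (A : Matrix (Fin n) (Fin m) ℂ)
    (hcol : ∀ j : Fin m, ∑ i : Fin n, A i j = (n : ℂ))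
    (hrow : ∀ i : Fin n, ∑ j : Fin m, A i j = (m : ℂ)) :
    n + m - Nat.gcd n m ≤ ({p : Fin n × Fin m | A p.1 p.2 ≠ 0}).ncard := by
  classical
  set G : SimpleGraph (Sum (Fin n) (Fin m)) :=
    { Adj := fun u v => ∃ i j, A i j ≠ 0 ∧
        ((u = .inl i ∧ v = .inr j) ∨ (u = .inr j ∧ v = .inl i)),
      symm := ⟨by rintro u v ⟨i, j, h, (⟨rfl, rfl⟩|⟨rfl, rfl⟩)⟩ <;> exact ⟨i, j, h, by tauto⟩⟩,
      loopless := ⟨by rintro u ⟨i, j, h, (⟨rfl, h2⟩|⟨rfl, h2⟩)⟩ <;> simp at h2⟩ } with hG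
  have hadj : ∀ i j, A i j ≠ 0 →
      G.connectedComponentMk (.inl i) = G.connectedComponentMk (.inr j) := by
    intro i j h
    exact ConnectedComponent.sound (SimpleGraph.Adj.reachable ⟨i, j, h, Or.inl ⟨rfl, rfl⟩⟩)
  haveI : Finite G.ConnectedComponent :=
    Finite.of_surjective G.connectedComponentMk (fun c => c.exists_rep)
  haveI : Fintype G.ConnectedComponent := Fintype.ofFinite _
  set R : G.ConnectedComponent → Finset (Fin n) :=
    fun c => univ.filter (fun i => G.connectedComponentMk (.inl i) = c) with hR
  set C : G.ConnectedComponent → Finset (Fin m) :=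
    fun c => univ.filter (fun j => G.connectedComponentMk (.inr j) = c) with hC
  -- each component's row/col counts satisfy r*m = c*n
  have hRC : ∀ c, (R c).card * m = (C c).card * n := by
    intro c
    have h1 : ∑ i ∈ R c, ∑ j ∈ C c, A i j = ((R c).card * m : ℂ) := by
      have hrow' : ∀ i ∈ R c, ∑ j ∈ C c, A i j = (m : ℂ) := by
        intro i hi
        rw [← hrow i]
        refine Finset.sum_subset (Finset.subset_univ _) ?_
        intro j _ hj
        by_contra h0
        refine hj ?_
        simp only [hC, mem_filter, mem_univ, true_and]
        rw [← hadj i j h0]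
        simpa [hR] using hi
      rw [Finset.sum_congr rfl hrow', Finset.sum_const, nsmul_eq_mul]
    have h2 : ∑ j ∈ C c, ∑ i ∈ R c, A i j = ((C c).card * n : ℂ) := by
      have hcol' : ∀ j ∈ C c, ∑ i ∈ R c, A i j = (n : ℂ) := by
        intro j hj
        rw [← hcol j]
        refine Finset.sum_subset (Finset.subset_univ _) ?_
        intro i _ hi
        by_contra h0
        refine hi ?_
        simp only [hR, mem_filter, mem_univ, true_and]
        rw [hadj i j h0]
        simpa [hC] using hj
      rw [Finset.sum_congr rfl hcol', Finset.sum_const, nsmul_eq_mul]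
    have := h1.symm.trans ((Finset.sum_comm).trans h2)
    exact_mod_cast this
  -- each component contains a row and a column
  have hRne : ∀ c, (R c).Nonempty := by
    intro c
    obtain ⟨v, rfl⟩ := c.exists_rep
    cases v with
    | inl i => exact ⟨i, by simp only [hR, mem_filter, mem_univ, true_and]; rfl⟩
    | inr j =>
      have : ∑ i : Fin n, A i j ≠ 0 := by rw [hcol j]; exact_mod_cast hn.ne'
      obtain ⟨i, -, h0⟩ : ∃ i ∈ univ, A i j ≠ 0 := by
        by_contra h
        push_neg at h
        exact this (Finset.sum_eq_zero (fun i hi => h i hi))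
      exact ⟨i, by simp only [hR, mem_filter, mem_univ, true_and]; rw [hadj i j h0]; rfl⟩
  -- number of components is at most gcd
  set g := Nat.gcd n m with hg
  have hg0 : 0 < g := Nat.gcd_pos_of_pos_left m hn
  set k := Fintype.card G.ConnectedComponent with hk
  have hsum : ∑ c : G.ConnectedComponent, (R c).card = n := by
    rw [hR]
    rw [← Finset.card_eq_sum_card_fiberwise (f := fun i : Fin n => G.connectedComponentMk (.inl i))
      (fun i _ => mem_univ _)]
    simp
  have hRlb : ∀ c, n / g ≤ (R c).card := by
    intro c
    have h1 : (R c).card * (m / g) = (C c).card * (n / g) := by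
      have h := hRC c
      have hmm : g * (m / g) = m := Nat.mul_div_cancel' (Nat.gcd_dvd_right n m)
      have hnn : g * (n / g) = n := Nat.mul_div_cancel' (Nat.gcd_dvd_left n m)
      have h2 : g * ((R c).card * (m / g)) = g * ((C c).card * (n / g)) := by
        calc g * ((R c).card * (m / g)) = (R c).card * (g * (m / g)) := by ring
        _ = (R c).card * m := by rw [hmm]
        _ = (C c).card * n := h
        _ = (C c).card * (g * (n / g)) := by rw [hnn]
        _ = g * ((C c).card * (n / g)) := by ring
      exact Nat.eq_of_mul_eq_mul_left hg0 h2
    have hco : Nat.Coprime (n / g) (m / g) := Nat.coprime_div_gcd_div_gcd hg0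
    have hdvd : (n / g) ∣ (R c).card := by
      refine (Nat.Coprime.dvd_of_dvd_mul_right hco ?_)
      exact ⟨(C c).card, by linarith [h1]⟩
    exact Nat.le_of_dvd (hRne c).card_pos hdvd
  have hkg : k ≤ g := by
    have h1 : k * (n / g) ≤ n := by
      calc k * (n / g) = ∑ _c : G.ConnectedComponent, (n / g) := by
            rw [Finset.sum_const, Finset.card_univ, smul_eq_mul]
          _ ≤ ∑ c : G.ConnectedComponent, (R c).card := Finset.sum_le_sum (fun c _ => hRlb c)
          _ = n := hsum
    have hn' : 0 < n / g := Nat.div_pos (Nat.le_of_dvd hn (Nat.gcd_dvd_left n m)) hg0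
    have : n = g * (n / g) := by rw [Nat.mul_div_cancel' (Nat.gcd_dvd_left n m)]
    nlinarith
  -- injection from vertices into support ⊎ components
  set S := {p : Fin n × Fin m | A p.1 p.2 ≠ 0} with hS
  have key : ∀ v : Sum (Fin n) (Fin m), v ≠ (G.connectedComponentMk v).out →
      ∃ p : Fin n × Fin m, A p.1 p.2 ≠ 0 ∧ ∃ u,
        ((v = .inl p.1 ∧ u = .inr p.2) ∨ (v = .inr p.2 ∧ u = .inl p.1)) ∧
        G.connectedComponentMk u = G.connectedComponentMk v ∧
        G.dist u (G.connectedComponentMk v).out < G.dist v (G.connectedComponentMk v).out := by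
    intro v hv
    obtain ⟨r, hr⟩ : ∃ r, r = (G.connectedComponentMk v).out := ⟨_, rfl⟩
    rw [← hr] at hv ⊢
    have hout : G.connectedComponentMk r = G.connectedComponentMk v := by
      rw [hr]; exact (G.connectedComponentMk v).out_eq
    have hre : G.Reachable v r := ConnectedComponent.exact hout.symm
    clear hr
    obtain ⟨w, hw⟩ := hre.exists_walk_length_eq_dist
    cases w with
    | nil => exact absurd rfl hv
    | @cons _ u _ h q =>
      obtain ⟨i, j, hij, hcase⟩ := h
      refine ⟨(i, j), hij, u, hcase, ?_, ?_⟩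
      · exact ConnectedComponent.sound (SimpleGraph.Adj.reachable
          (G.adj_symm ⟨i, j, hij, hcase⟩))
      · have hle : G.dist u r ≤ q.length := SimpleGraph.dist_le q
        simp only [SimpleGraph.Walk.length_cons] at hw
        omega
  haveI : Inhabited (Fin n) := ⟨⟨0, hn⟩⟩
  haveI : Inhabited (Fin m) := ⟨⟨0, hm⟩⟩
  choose! P hP U hU hUc hUd using key
  set f : Sum (Fin n) (Fin m) → S ⊕ G.ConnectedComponent := fun v =>
    if h : v = (G.connectedComponentMk v).out then Sum.inr (G.connectedComponentMk v)
    else Sum.inl ⟨P v, hP v h⟩ with hf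
  have hfinj : Function.Injective f := by
    intro v w hvw
    by_cases hv : v = (G.connectedComponentMk v).out <;>
      by_cases hw' : w = (G.connectedComponentMk w).out
    · simp only [hf, dif_pos hv, dif_pos hw', Sum.inr.injEq] at hvw
      rw [hv, hw', hvw]
    · simp only [hf, dif_pos hv, dif_neg hw'] at hvw
      exact absurd hvw (by simp)
    · simp only [hf, dif_neg hv, dif_pos hw'] at hvw
      exact absurd hvw (by simp)
    · simp only [hf, dif_neg hv, dif_neg hw', Sum.inl.injEq, Subtype.mk.injEq] at hvw
      by_contra hne
      obtain h1 | h1 := hU v hv <;> obtain h2 | h2 := hU w hw'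
      · exact hne (by rw [h1.1, h2.1, hvw])
      · have huv : U v = w := by rw [h1.2, hvw, ← h2.1]
        have huw : U w = v := by rw [h2.2, ← hvw, ← h1.1]
        have hcc : G.connectedComponentMk w = G.connectedComponentMk v := huv ▸ hUc v hv
        have d1 := hUd v hv
        rw [huv] at d1
        have d2 := hUd w hw'
        rw [huw, hcc] at d2
        omega
      · have huv : U v = w := by rw [h1.2, hvw, ← h2.1]
        have huw : U w = v := by rw [h2.2, ← hvw, ← h1.1]
        have hcc : G.connectedComponentMk w = G.connectedComponentMk v := huv ▸ hUc v hv
        have d1 := hUd v hv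
        rw [huv] at d1
        have d2 := hUd w hw'
        rw [huw, hcc] at d2
        omega
      · exact hne (by rw [h1.1, h2.1, hvw])
  have hcard : n + m ≤ S.ncard + k := by
    have h1 : Nat.card (Sum (Fin n) (Fin m)) ≤ Nat.card (↥S ⊕ G.ConnectedComponent) :=
      Nat.card_le_card_of_injective f hfinj
    have h2 : Nat.card (Sum (Fin n) (Fin m)) = n + m := by simp
    have h3 : Nat.card (↥S ⊕ G.ConnectedComponent) = S.ncard + k := by
      rw [Nat.card_sum, Nat.card_coe_set_eq, Nat.card_eq_fintype_card]
    omega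
  omega
end

section
/- For all positive integers n and m, the minimal size of the support of an n × m doubly stochastic array is exactly n + m − gcd(n, m); that is, every A in S(n,m) satisfies |supp A| ≥ n + m − gcd(n,m), and this value is attained by some A in S(n,m). -/
/-- An `n × m` real matrix is a *doubly stochastic array* if its entries are
nonnegative, each column sums to `n` and each row sums to `m`. -/
def IsDSA (n m : ℕ) (A : Matrix (Fin n) (Fin m) ℝ) : Prop :=
  (∀ i j, 0 ≤ A i j) ∧ (∀ j, ∑ i, A i j = (n : ℝ)) ∧ (∀ i, ∑ j, A i j = (m : ℝ))

/-- An array `A ∈ S(n,m)` is *extremal* if it cannot be written as a convex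
combination of two doubly stochastic arrays both different from `A`. -/
def IsExtremal (n m : ℕ) (A : Matrix (Fin n) (Fin m) ℝ) : Prop :=
  IsDSA n m A ∧ ∀ (B C : Matrix (Fin n) (Fin m) ℝ) (t : ℝ),
    IsDSA n m B → IsDSA n m C → 0 < t → t < 1 →
    A = t • B + (1 - t) • C → B = A ∨ C = A

/-- The support of a matrix: the set of positions of its nonzero entries. -/
def matSupp (n m : ℕ) (A : Matrix (Fin n) (Fin m) ℝ) : Set (Fin n × Fin m) :=
  {p | A p.1 p.2 ≠ 0}

/-- The size of the support of a matrix. -/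
noncomputable def suppCard (n m : ℕ) (A : Matrix (Fin n) (Fin m) ℝ) : ℕ :=
  (matSupp n m A).ncard

/-- A subset `Ω` of positions contains a *cycle* if there are `s ≥ 2`, distinct row
indices `i₁,…,i_s` and distinct column indices `j₁,…,j_s` such that all the pairs
`(i₁,j₁), (i₂,j₁), (i₂,j₂), (i₃,j₂), …, (i_s,j_s), (i₁,j_s)` belong to `Ω`. -/
def ContainsCycle (n m : ℕ) (Ω : Set (Fin n × Fin m)) : Prop :=
  ∃ s : ℕ, 2 ≤ s ∧ ∃ (i : ZMod s → Fin n) (j : ZMod s → Fin m),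
    Function.Injective i ∧ Function.Injective j ∧
    ∀ t : ZMod s, (i t, j t) ∈ Ω ∧ (i (t + 1), j t) ∈ Ω

/-- Two matrices are *equivalent* if one is obtained from the other by a
permutation of rows and a permutation of columns. -/
def MatEquiv (n m : ℕ) (A B : Matrix (Fin n) (Fin m) ℝ) : Prop :=
  ∃ (σ : Equiv.Perm (Fin n)) (τ : Equiv.Perm (Fin m)), ∀ i j, B i j = A (σ i) (τ j)




private lemma eqvGen_split {α : Type*} (r : α → α → Prop) (a b : α) {u v : α}
    (h : Relation.EqvGen (fun x y => r x y ∨ (x = a ∧ y = b) ∨ (x = b ∧ y = a)) u v) :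
    Relation.EqvGen r u v ∨
      ((Relation.EqvGen r u a ∨ Relation.EqvGen r u b) ∧
       (Relation.EqvGen r v a ∨ Relation.EqvGen r v b)) := by
  induction h with
  | rel x y hxy =>
    rcases hxy with h | ⟨rfl, rfl⟩ | ⟨rfl, rfl⟩
    · exact Or.inl (Relation.EqvGen.rel _ _ h)
    · exact Or.inr ⟨Or.inl (Relation.EqvGen.refl _), Or.inr (Relation.EqvGen.refl _)⟩
    · exact Or.inr ⟨Or.inr (Relation.EqvGen.refl _), Or.inl (Relation.EqvGen.refl _)⟩
  | refl x => exact Or.inl (Relation.EqvGen.refl x)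
  | symm x y _ ih =>
    rcases ih with h | ⟨h1, h2⟩
    · exact Or.inl (Relation.EqvGen.symm _ _ h)
    · exact Or.inr ⟨h2, h1⟩
  | trans x y z _ _ ih1 ih2 =>
    rcases ih1 with h1 | ⟨ha, hb⟩
    · rcases ih2 with h2 | ⟨hc, hd⟩
      · exact Or.inl (Relation.EqvGen.trans _ _ _ h1 h2)
      · exact Or.inr ⟨hc.imp (Relation.EqvGen.trans _ _ _ h1) (Relation.EqvGen.trans _ _ _ h1), hd⟩
    · rcases ih2 with h2 | ⟨hc, hd⟩
      · exact Or.inr ⟨ha, hb.imp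
          (Relation.EqvGen.trans _ _ _ (Relation.EqvGen.symm _ _ h2))
          (Relation.EqvGen.trans _ _ _ (Relation.EqvGen.symm _ _ h2))⟩
      · exact Or.inr ⟨ha, hd⟩

private lemma card_quot_step {α : Type*} [Finite α] (r : α → α → Prop) (a b : α) :
    Nat.card (Quotient (Relation.EqvGen.setoid r)) ≤
      Nat.card (Quotient (Relation.EqvGen.setoid
        (fun x y => r x y ∨ (x = a ∧ y = b) ∨ (x = b ∧ y = a)))) + 1 := by
  classical
  set r' : α → α → Prop := fun x y => r x y ∨ (x = a ∧ y = b) ∨ (x = b ∧ y = a) with hr'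
  let f : Quotient (Relation.EqvGen.setoid r) → Quotient (Relation.EqvGen.setoid r') :=
    Quotient.map' id (fun x y h => Relation.EqvGen.mono (fun u v huv => Or.inl huv) x y h)
  let g : Quotient (Relation.EqvGen.setoid r) → Option (Quotient (Relation.EqvGen.setoid r')) :=
    fun q => if q = Quotient.mk _ b then none else some (f q)
  have hg : Function.Injective g := by
    intro x y hxy
    by_cases hx : x = Quotient.mk _ b <;> by_cases hy : y = Quotient.mk _ b
    · rw [hx, hy]
    · simp only [g, if_pos hx, if_neg hy] at hxy; exact absurd hxy (by simp)
    · simp only [g, if_neg hx, if_pos hy] at hxy; exact absurd hxy (by simp)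
    · simp only [g, if_neg hx, if_neg hy] at hxy
      obtain ⟨u, rfl⟩ := Quotient.exists_rep x
      obtain ⟨v, rfl⟩ := Quotient.exists_rep y
      simp only [Option.some.injEq] at hxy
      have huv : Relation.EqvGen r' u v := by
        have := Quotient.exact' (s₁ := Relation.EqvGen.setoid r') hxy
        exact this
      rcases eqvGen_split r a b huv with h | ⟨h1, h2⟩
      · exact Quotient.sound h
      · have h1a : Relation.EqvGen r u a := by
          rcases h1 with h | h
          · exact h
          · exact absurd (Quotient.sound h) hx
        have h2a : Relation.EqvGen r v a := by
          rcases h2 with h | h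
          · exact h
          · exact absurd (Quotient.sound h) hy
        exact Quotient.sound (Relation.EqvGen.trans _ _ _ h1a (Relation.EqvGen.symm _ _ h2a))
  haveI : Finite (Quotient (Relation.EqvGen.setoid r')) := Quotient.finite _
  haveI := Fintype.ofFinite (Quotient (Relation.EqvGen.setoid r'))
  calc Nat.card (Quotient (Relation.EqvGen.setoid r))
      ≤ Nat.card (Option (Quotient (Relation.EqvGen.setoid r'))) :=
        Nat.card_le_card_of_injective g hg
    _ = _ := Finite.card_option

private lemma card_le_edges {α : Type*} [Fintype α] [DecidableEq α] (S : Finset (α × α)) :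
    Fintype.card α ≤ S.card + Nat.card (Quotient (Relation.EqvGen.setoid
      (fun x y => (x, y) ∈ S ∨ (y, x) ∈ S))) := by
  classical
  induction S using Finset.induction_on with
  | empty =>
    have h : ∀ u v : α, Relation.EqvGen
        (fun x y : α => (x, y) ∈ (∅ : Finset (α × α)) ∨ (y, x) ∈ (∅ : Finset (α × α))) u v →
        u = v := by
      intro u v h
      induction h with
      | rel x y h => simp at h
      | refl => rfl
      | symm _ _ _ ih => exact ih.symm
      | trans _ _ _ _ _ ih1 ih2 => exact ih1.trans ih2
    have hinj : Function.Injective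
        (Quotient.mk (Relation.EqvGen.setoid
          (fun x y : α => (x, y) ∈ (∅ : Finset (α × α)) ∨ (y, x) ∈ (∅ : Finset (α × α))))) :=
      fun u v huv => h u v (Quotient.exact huv)
    simpa [Nat.card_eq_fintype_card] using Nat.card_le_card_of_injective _ hinj
  | @insert e S he ih =>
    have hrel : (fun x y : α => (x, y) ∈ insert e S ∨ (y, x) ∈ insert e S) =
        (fun x y : α => ((x, y) ∈ S ∨ (y, x) ∈ S) ∨ (x = e.1 ∧ y = e.2) ∨
          (x = e.2 ∧ y = e.1)) := by
      funext x y
      simp only [Finset.mem_insert, Prod.ext_iff, eq_iff_iff]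
      constructor <;> intro h <;> tauto
    have hstep := card_quot_step (fun x y : α => (x, y) ∈ S ∨ (y, x) ∈ S) e.1 e.2
    rw [← hrel] at hstep
    calc Fintype.card α
        ≤ S.card + Nat.card (Quotient (Relation.EqvGen.setoid
            (fun x y : α => (x, y) ∈ S ∨ (y, x) ∈ S))) := ih
      _ ≤ S.card + (Nat.card (Quotient (Relation.EqvGen.setoid
            (fun x y : α => (x, y) ∈ insert e S ∨ (y, x) ∈ insert e S))) + 1) :=
          Nat.add_le_add_left hstep _
      _ = (insert e S).card + _ := by rw [Finset.card_insert_of_notMem he]; ring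


open Finset
private lemma dsa_lower_bound (n m : ℕ) (hn : 0 < n) (hm : 0 < m)
    (A : Matrix (Fin n) (Fin m) ℝ) (hA : IsDSA n m A) :
    n + m - Nat.gcd n m ≤ suppCard n m A := by
  classical
  obtain ⟨hpos, hcol, hrow⟩ := hA
  set F : Finset (Fin n × Fin m) := univ.filter (fun p => A p.1 p.2 ≠ 0) with hF
  have hsupp : suppCard n m A = F.card := by
    rw [suppCard, matSupp, show {p : Fin n × Fin m | A p.1 p.2 ≠ 0} = ↑F by ext p; simp [hF]]
    exact Set.ncard_coe_finset F
  set S : Finset ((Fin n ⊕ Fin m) × (Fin n ⊕ Fin m)) :=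
    F.image (fun p => (Sum.inl p.1, Sum.inr p.2)) with hS
  have hScard : S.card = F.card := Finset.card_image_of_injective _ (by
    intro p q h
    simp only [Prod.mk.injEq, Sum.inl.injEq, Sum.inr.injEq] at h
    exact Prod.ext h.1 h.2)
  set r : (Fin n ⊕ Fin m) → (Fin n ⊕ Fin m) → Prop :=
    fun x y => (x, y) ∈ S ∨ (y, x) ∈ S with hrdef
  set sd := Relation.EqvGen.setoid r with hsd
  have hr : ∀ i j, A i j ≠ 0 →
      (Quotient.mk sd (Sum.inl i) = Quotient.mk sd (Sum.inr j)) := by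
    intro i j hij
    refine Quotient.sound (Relation.EqvGen.rel _ _ (Or.inl ?_))
    simp [hS, hF]
    exact hij
  letI : Fintype (Quotient sd) := Fintype.ofFinite _
  set g := Nat.gcd n m with hg
  have hg0 : 0 < g := Nat.gcd_pos_of_pos_left _ hn
  set n' := n / g with hn'
  set m' := m / g with hm'
  have hng : n = g * n' := (Nat.div_mul_cancel (Nat.gcd_dvd_left n m)).symm.trans (mul_comm _ _)
  have hmg : m = g * m' := (Nat.div_mul_cancel (Nat.gcd_dvd_right n m)).symm.trans (mul_comm _ _)
  have hn'0 : 0 < n' := by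
    rcases Nat.eq_zero_or_pos n' with h | h
    · rw [h, mul_zero] at hng; omega
    · exact h
  have hcop : Nat.Coprime n' m' := Nat.coprime_div_gcd_div_gcd hg0
  -- each class has at least n' rows
  have hfiber : ∀ q : Quotient sd,
      n' ≤ (univ.filter (fun i : Fin n => Quotient.mk sd (Sum.inl i) = q)).card := by
    intro q
    set Rq := univ.filter (fun i : Fin n => Quotient.mk sd (Sum.inl i) = q) with hRq
    set Cq := univ.filter (fun j : Fin m => Quotient.mk sd (Sum.inr j) = q) with hCq
    have key : (Rq.card : ℝ) * m = (Cq.card : ℝ) * n := by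
      have h1 : ∑ i ∈ Rq, ∑ j, A i j = (Rq.card : ℝ) * m := by
        rw [Finset.sum_congr rfl (fun i _ => hrow i)]
        simp [mul_comm]
      have h2 : ∑ j ∈ Cq, ∑ i, A i j = (Cq.card : ℝ) * n := by
        rw [Finset.sum_congr rfl (fun j _ => hcol j)]
        simp [mul_comm]
      have h3 : ∀ i ∈ Rq, ∑ j, A i j = ∑ j ∈ Cq, A i j := by
        intro i hi
        refine (Finset.sum_subset (Finset.subset_univ _) ?_).symm
        intro j _ hj
        by_contra hA0
        apply hj
        simp only [hCq, Finset.mem_filter, Finset.mem_univ, true_and]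
        rw [← hr i j hA0]
        simpa [hRq] using hi
      have h4 : ∀ j ∈ Cq, ∑ i, A i j = ∑ i ∈ Rq, A i j := by
        intro j hj
        refine (Finset.sum_subset (Finset.subset_univ _) ?_).symm
        intro i _ hi
        by_contra hA0
        apply hi
        simp only [hRq, Finset.mem_filter, Finset.mem_univ, true_and]
        rw [hr i j hA0]
        simpa [hCq] using hj
      calc (Rq.card : ℝ) * m = ∑ i ∈ Rq, ∑ j, A i j := h1.symm
        _ = ∑ i ∈ Rq, ∑ j ∈ Cq, A i j := Finset.sum_congr rfl h3
        _ = ∑ j ∈ Cq, ∑ i ∈ Rq, A i j := Finset.sum_comm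
        _ = ∑ j ∈ Cq, ∑ i, A i j := (Finset.sum_congr rfl h4).symm
        _ = (Cq.card : ℝ) * n := h2
    have keyN : Rq.card * m = Cq.card * n := by exact_mod_cast key
    have hRq1 : 1 ≤ Rq.card := by
      rw [Nat.one_le_iff_ne_zero, ← Nat.pos_iff_ne_zero, Finset.card_pos]
      obtain ⟨v, rfl⟩ := Quotient.exists_rep q
      cases v with
      | inl i => exact ⟨i, by simp only [hRq, Finset.mem_filter, Finset.mem_univ, true_and]⟩
      | inr j =>
        have : ∃ i, A i j ≠ 0 := by
          by_contra hc
          push_neg at hc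
          have h8 := hcol j
          rw [Finset.sum_congr rfl (fun i _ => hc i), Finset.sum_const_zero] at h8
          rw [eq_comm, Nat.cast_eq_zero] at h8
          omega
        obtain ⟨i, hi⟩ := this
        refine ⟨i, ?_⟩
        simp only [hRq, Finset.mem_filter, Finset.mem_univ, true_and]
        exact hr i j hi
    have hdvd : n' ∣ Rq.card := by
      have h6 : g * (Rq.card * m') = g * (Cq.card * n') := by
        calc g * (Rq.card * m') = Rq.card * (g * m') := by ring
          _ = Rq.card * m := by rw [← hmg]
          _ = Cq.card * n := keyN
          _ = Cq.card * (g * n') := by rw [← hng]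
          _ = g * (Cq.card * n') := by ring
      have hc6 : Rq.card * m' = Cq.card * n' := Nat.eq_of_mul_eq_mul_left hg0 h6
      have h5 : n' ∣ Rq.card * m' := ⟨Cq.card, by rw [hc6]; ring⟩
      exact (Nat.Coprime.dvd_of_dvd_mul_right hcop h5)
    exact Nat.le_of_dvd hRq1 hdvd
  -- number of classes ≤ g
  have hclasses : Fintype.card (Quotient sd) * n' ≤ n := by
    have := Finset.card_eq_sum_card_fiberwise
      (f := fun i : Fin n => Quotient.mk sd (Sum.inl i)) (s := univ) (t := univ)
      (fun x _ => Finset.mem_univ _)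
    rw [Finset.card_univ, Fintype.card_fin] at this
    calc Fintype.card (Quotient sd) * n'
        = ∑ _q : Quotient sd, n' := by simp [mul_comm]
      _ ≤ ∑ q : Quotient sd,
          (univ.filter (fun i : Fin n => Quotient.mk sd (Sum.inl i) = q)).card :=
          Finset.sum_le_sum (fun q _ => hfiber q)
      _ = n := this.symm
  have hQ : Fintype.card (Quotient sd) ≤ g := by
    have h7 : Fintype.card (Quotient sd) * n' ≤ g * n' := by rw [← hng]; exact hclasses
    exact Nat.le_of_mul_le_mul_right h7 hn'0
  have hmain := card_le_edges S
  rw [Fintype.card_sum, Fintype.card_fin, Fintype.card_fin] at hmain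
  have hmain' : n + m ≤ S.card + Nat.card (Quotient sd) := hmain
  rw [Nat.card_eq_fintype_card] at hmain'
  rw [hsupp]
  omega


open Finset
private def natEnt (n m i j : ℕ) : ℕ :=
  min ((i + 1) * m) ((j + 1) * n) - max (i * m) (j * n)

private lemma natEnt_symm (n m i j : ℕ) : natEnt n m i j = natEnt m n j i := by
  unfold natEnt; omega

private lemma natEnt_row_sum (n m : ℕ) (i : ℕ) (hi : i < n) :
    ∑ j ∈ range m, natEnt n m i j = m := by
  have key : ∀ j, natEnt n m i j =
      min (max ((j + 1) * n) (i * m)) ((i + 1) * m) -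
        min (max (j * n) (i * m)) ((i + 1) * m) := by
    intro j; unfold natEnt
    have h1 : (j + 1) * n = j * n + n := by ring
    have h2 : (i + 1) * m = i * m + m := by ring
    omega
  have hmono : Monotone (fun x : ℕ => min (max (x * n) (i * m)) ((i + 1) * m)) := by
    intro a b hab
    have : a * n ≤ b * n := Nat.mul_le_mul_right _ hab
    simp only
    omega
  have hts := Finset.sum_range_tsub (f := fun x : ℕ => min (max (x * n) (i * m)) ((i + 1) * m))
    hmono m
  rw [Finset.sum_congr rfl (fun j _ => key j), hts]
  have h1 : (i + 1) * m ≤ m * n := by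
    calc (i + 1) * m ≤ n * m := Nat.mul_le_mul_right _ hi
      _ = m * n := mul_comm _ _
  have h2 : (i + 1) * m = i * m + m := by ring
  simp only [Nat.zero_mul]
  omega

private lemma count_mult (k l : ℕ) (hl : 0 < l) :
    ((range (k * l)).filter (l ∣ ·)).card = k := by
  have him : (range (k * l)).filter (l ∣ ·) = (range k).image (· * l) := by
    ext v
    simp only [Finset.mem_filter, Finset.mem_range, Finset.mem_image]
    constructor
    · rintro ⟨hv, c, rfl⟩
      refine ⟨c, ?_, by ring⟩
      have : c * l < k * l := by rw [mul_comm c l]; exact hv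
      exact lt_of_mul_lt_mul_right this (Nat.zero_le l)
    · rintro ⟨c, hc, rfl⟩
      exact ⟨(Nat.mul_lt_mul_right hl).mpr hc, ⟨c, by ring⟩⟩
  rw [him, Finset.card_image_of_injective _ (mul_left_injective₀ hl.ne')]
  simp

private lemma nat_lt_div_succ_mul (v l : ℕ) (hl : 0 < l) : v < (v / l + 1) * l := by
  have := (Nat.div_lt_iff_lt_mul hl).mp (Nat.lt_succ_self (v / l))
  linarith

private lemma dsa_exists (n m : ℕ) (hn : 0 < n) (hm : 0 < m) :
    ∃ A : Matrix (Fin n) (Fin m) ℝ, IsDSA n m A ∧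
      suppCard n m A = n + m - Nat.gcd n m := by
  classical
  set B : Matrix (Fin n) (Fin m) ℝ := fun i j => (natEnt n m i.1 j.1 : ℝ) with hB
  refine ⟨B, ⟨fun i j => Nat.cast_nonneg _, ?_, ?_⟩, ?_⟩
  · intro j
    show ∑ i : Fin n, (natEnt n m i.1 j.1 : ℝ) = (n : ℝ)
    rw [Fin.sum_univ_eq_sum_range (fun i => (natEnt n m i j.1 : ℝ)) n, ← Nat.cast_sum]
    rw [Nat.cast_inj.mpr
      ((Finset.sum_congr rfl (fun i _ => natEnt_symm n m i j.1)).trans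
        (natEnt_row_sum m n j.1 j.2))]
  · intro i
    show ∑ j : Fin m, (natEnt n m i.1 j.1 : ℝ) = (m : ℝ)
    rw [Fin.sum_univ_eq_sum_range (fun j => (natEnt n m i.1 j : ℝ)) m, ← Nat.cast_sum]
    rw [Nat.cast_inj.mpr (natEnt_row_sum n m i.1 i.2)]
  · -- support size
    set Fs : Finset (Fin n × Fin m) := univ.filter (fun p => B p.1 p.2 ≠ 0) with hFs
    have hsupp : suppCard n m B = Fs.card := by
      rw [suppCard, matSupp, show {p : Fin n × Fin m | B p.1 p.2 ≠ 0} = ↑Fs by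
        ext p; simp [hFs]]
      exact Set.ncard_coe_finset Fs
    have hmem : ∀ p : Fin n × Fin m, p ∈ Fs ↔
        max (p.1.1 * m) (p.2.1 * n) < min ((p.1.1 + 1) * m) ((p.2.1 + 1) * n) := by
      intro p
      simp only [hFs, Finset.mem_filter, Finset.mem_univ, true_and, hB, ne_eq,
        Nat.cast_eq_zero]
      unfold natEnt
      omega
    set T : Finset ℕ := (range (n * m)).filter (fun v => m ∣ v ∨ n ∣ v) with hT
    have hcard : Fs.card = T.card := by
      refine Finset.card_bij (fun p _ => max (p.1.1 * m) (p.2.1 * n)) ?_ ?_ ?_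
      · intro p hp
        rw [hmem p] at hp
        have hle : (p.1.1 + 1) * m ≤ n * m := Nat.mul_le_mul_right _ p.1.2
        simp only [hT, Finset.mem_filter, Finset.mem_range]
        constructor
        · omega
        · rcases max_choice (p.1.1 * m) (p.2.1 * n) with h | h <;> rw [h]
          · exact Or.inl ⟨p.1.1, mul_comm _ _⟩
          · exact Or.inr ⟨p.2.1, mul_comm _ _⟩
      · intro p hp q hq hpq
        rw [hmem p] at hp
        rw [hmem q] at hq
        have hpq' : max (p.1.1 * m) (p.2.1 * n) = max (q.1.1 * m) (q.2.1 * n) := hpq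
        set v := max (p.1.1 * m) (p.2.1 * n) with hv
        have hip : v / m = p.1.1 := Nat.div_eq_of_lt_le (by omega) (by omega)
        have hjp : v / n = p.2.1 := Nat.div_eq_of_lt_le (by omega) (by omega)
        have hiq : v / m = q.1.1 := Nat.div_eq_of_lt_le (by omega) (by omega)
        have hjq : v / n = q.2.1 := Nat.div_eq_of_lt_le (by omega) (by omega)
        exact Prod.ext (Fin.ext (by omega)) (Fin.ext (by omega))
      · intro v hv
        simp only [hT, Finset.mem_filter, Finset.mem_range] at hv
        obtain ⟨hvlt, hdvd⟩ := hv
        have hi : v / m < n := Nat.div_lt_of_lt_mul (by rwa [mul_comm] at hvlt)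
        have hj : v / n < m := Nat.div_lt_of_lt_mul hvlt
        refine ⟨(⟨v / m, hi⟩, ⟨v / n, hj⟩), ?_, ?_⟩
        · rw [hmem]
          simp only
          have h1 : v / m * m ≤ v := Nat.div_mul_le_self v m
          have h2 : v / n * n ≤ v := Nat.div_mul_le_self v n
          have h3 : v < (v / m + 1) * m := nat_lt_div_succ_mul v m hm
          have h4 : v < (v / n + 1) * n := nat_lt_div_succ_mul v n hn
          omega
        · simp only
          have h1 : v / m * m ≤ v := Nat.div_mul_le_self v m
          have h2 : v / n * n ≤ v := Nat.div_mul_le_self v n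
          rcases hdvd with h | h
          · have : v / m * m = v := Nat.div_mul_cancel h
            omega
          · have : v / n * n = v := Nat.div_mul_cancel h
            omega
    have hcardT : T.card + Nat.gcd n m = n + m := by
      have hsplit : T = (range (n * m)).filter (m ∣ ·) ∪ (range (n * m)).filter (n ∣ ·) := by
        rw [hT, ← Finset.filter_or]
      have hinter : (range (n * m)).filter (m ∣ ·) ∩ (range (n * m)).filter (n ∣ ·)
          = (range (n * m)).filter (Nat.lcm n m ∣ ·) := by
        rw [← Finset.filter_and]
        refine Finset.filter_congr (fun v _ => ?_)
        rw [Nat.lcm_dvd_iff]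
        tauto
      have hc1 : ((range (n * m)).filter (m ∣ ·)).card = n := count_mult n m hm
      have hc2 : ((range (n * m)).filter (n ∣ ·)).card = m := by
        rw [mul_comm]; exact count_mult m n hn
      have hc3 : ((range (n * m)).filter (Nat.lcm n m ∣ ·)).card = Nat.gcd n m := by
        have hlcm : 0 < Nat.lcm n m := Nat.lcm_pos hn hm
        have : n * m = Nat.gcd n m * Nat.lcm n m := (Nat.gcd_mul_lcm n m).symm
        rw [this]
        exact count_mult _ _ hlcm
      have := Finset.card_union_add_card_inter
        ((range (n * m)).filter (m ∣ ·)) ((range (n * m)).filter (n ∣ ·))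
      rw [hinter, hc1, hc2, hc3, ← hsplit] at this
      omega
    have hgle : Nat.gcd n m ≤ m := Nat.le_of_dvd hm (Nat.gcd_dvd_right n m)
    omega

/-- The minimal support size of an `n × m` doubly stochastic array
is exactly `n + m − gcd(n,m)`. -/
theorem minimal_support_size (n m : ℕ) (hn : 0 < n) (hm : 0 < m) :
    (∀ A : Matrix (Fin n) (Fin m) ℝ, IsDSA n m A →
      n + m - Nat.gcd n m ≤ suppCard n m A) ∧
    (∃ A : Matrix (Fin n) (Fin m) ℝ, IsDSA n m A ∧
      suppCard n m A = n + m - Nat.gcd n m) := by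
  exact ⟨fun A hA => dsa_lower_bound n m hn hm A hA, dsa_exists n m hn hm⟩
end

section
/- Let n and m be positive integers, d = gcd(n, m), n = d·p and m = d·q (so p and q are coprime). An n × m doubly stochastic array A has support of size n + m − d if and only if, possibly after a permutation of rows and a permutation of columns, A is the block diagonal matrix d·diag(A₁, A₂, …, A_d), where each A_k is a p × q doubly stochastic array with support of size p + q − 1. -/
/-- The row (or column) index of the `(k,a)` entry of a `d × p` block structure
inside `Fin (d * p)`: block `k`, position `a` within the block. -/
def blockIdx {d p : ℕ} (k : Fin d) (a : Fin p) : Fin (d * p) :=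
  ⟨k.val * p + a.val, by
    have hk : k.val + 1 ≤ d := k.isLt
    have ha : a.val < p := a.isLt
    calc k.val * p + a.val < (k.val + 1) * p := by nlinarith
      _ ≤ d * p := Nat.mul_le_mul_right p hk⟩


section Aux

open Finset SimpleGraph


variable {n m : ℕ} (A : Matrix (Fin n) (Fin m) ℝ)

/-- The bipartite graph of the support of `A`. -/
def dsaGraph : SimpleGraph (Fin n ⊕ Fin m) :=
  SimpleGraph.fromRel (fun u v =>
    match u, v with
    | .inl i, .inr j => A i j ≠ 0
    | _, _ => False)

lemma dsaGraph_adj_inl_inr {i : Fin n} {j : Fin m} :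
    (dsaGraph A).Adj (.inl i) (.inr j) ↔ A i j ≠ 0 := by
  simp [dsaGraph, SimpleGraph.fromRel_adj]

lemma dsaGraph_adj_cases {u v : Fin n ⊕ Fin m} (h : (dsaGraph A).Adj u v) :
    (∃ i j, u = .inl i ∧ v = .inr j ∧ A i j ≠ 0) ∨
      (∃ i j, u = .inr j ∧ v = .inl i ∧ A i j ≠ 0) := by
  rcases u with i | j <;> rcases v with i' | j'
  · exfalso; revert h; simp [dsaGraph, SimpleGraph.fromRel_adj]
  · left; exact ⟨i, j', rfl, rfl, (dsaGraph_adj_inl_inr A).mp h⟩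
  · right; exact ⟨i', j, rfl, rfl, (dsaGraph_adj_inl_inr A).mp h.symm⟩
  · exfalso; revert h; simp [dsaGraph, SimpleGraph.fromRel_adj]

lemma parent_lemma {V : Type*} (G : SimpleGraph V) {v w : V} (hr : G.Reachable v w)
    (hne : v ≠ w) : ∃ u, G.Adj v u ∧ G.dist u w + 1 = G.dist v w := by
  obtain ⟨W, hW⟩ := hr.exists_walk_length_eq_dist
  cases W with
  | nil => exact absurd rfl hne
  | @cons _ u _ h W' =>
    refine ⟨u, h, ?_⟩
    have h1 : G.dist u w ≤ W'.length := SimpleGraph.dist_le W'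
    have h2 : G.dist v w ≤ G.dist u w + 1 := by
      obtain ⟨P, hP⟩ := W'.reachable.exists_walk_length_eq_dist
      have := SimpleGraph.dist_le (SimpleGraph.Walk.cons h P)
      simpa [hP, Nat.add_comm] using this
    simp only [SimpleGraph.Walk.length_cons] at hW
    omega


/-- Junk-valued extractor of the support pair corresponding to an edge. -/
def pairOf (hn : 0 < n) (hm : 0 < m) : (Fin n ⊕ Fin m) → (Fin n ⊕ Fin m) → Fin n × Fin m
  | .inl i, .inr j => (i, j)
  | .inr j, .inl i => (i, j)
  | _, _ => (⟨0, hn⟩, ⟨0, hm⟩)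

@[simp] lemma pairOf_inl_inr (hn : 0 < n) (hm : 0 < m) (i : Fin n) (j : Fin m) :
    pairOf hn hm (.inl i) (.inr j) = (i, j) := rfl

@[simp] lemma pairOf_inr_inl (hn : 0 < n) (hm : 0 < m) (i : Fin n) (j : Fin m) :
    pairOf hn hm (.inr j) (.inl i) = (i, j) := rfl

open scoped Classical in
/-- Connectivity bound: each connected component with `v` vertices contains at
least `v - 1` edges of the support. -/
lemma comp_card_bound (hn : 0 < n) (hm : 0 < m) (K : (dsaGraph A).ConnectedComponent) :
    (univ.filter fun v : Fin n ⊕ Fin m => (dsaGraph A).connectedComponentMk v = K).card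
      ≤ (univ.filter fun x : Fin n × Fin m =>
          A x.1 x.2 ≠ 0 ∧ (dsaGraph A).connectedComponentMk (.inl x.1) = K).card + 1 := by
  classical
  have hrK : (dsaGraph A).connectedComponentMk K.out = K := K.out_eq
  set f : (Fin n ⊕ Fin m) → Fin n × Fin m := fun v =>
    if h : ∃ u, (dsaGraph A).Adj v u ∧
        (dsaGraph A).dist u K.out + 1 = (dsaGraph A).dist v K.out then pairOf hn hm v h.choose
    else (⟨0, hn⟩, ⟨0, hm⟩) with hf
  have key : ∀ v, (dsaGraph A).connectedComponentMk v = K → v ≠ K.out →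
      ∃ u, (dsaGraph A).Adj v u ∧
        (dsaGraph A).dist u K.out + 1 = (dsaGraph A).dist v K.out := by
    intro v hv hvr
    exact parent_lemma _ (SimpleGraph.ConnectedComponent.exact (hv.trans hrK.symm)) hvr
  have hcard : ((univ.filter fun v : Fin n ⊕ Fin m =>
      (dsaGraph A).connectedComponentMk v = K).erase K.out).card
      ≤ (univ.filter fun x : Fin n × Fin m =>
          A x.1 x.2 ≠ 0 ∧ (dsaGraph A).connectedComponentMk (.inl x.1) = K).card := by
    apply Finset.card_le_card_of_injOn f
    · -- maps to
      intro v hv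
      simp only [Finset.mem_coe, Finset.mem_erase, Finset.mem_filter, Finset.mem_univ, true_and] at hv
      obtain ⟨hvr, hvK⟩ := hv
      have hex := key v hvK hvr
      obtain ⟨hadj, -⟩ := hex.choose_spec
      simp only [Finset.mem_coe, hf, dif_pos hex, Finset.mem_filter, Finset.mem_univ, true_and]
      generalize hgen : hex.choose = u at hadj
      rcases dsaGraph_adj_cases A hadj with ⟨i, j, hv1, hu1, hAij⟩ | ⟨i, j, hv1, hu1, hAij⟩
      · rw [hv1, hu1, pairOf_inl_inr]
        exact ⟨hAij, by rw [← hv1]; exact hvK⟩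
      · rw [hv1, hu1, pairOf_inr_inl]
        refine ⟨hAij, ?_⟩
        have hadj2 : (dsaGraph A).Adj v (Sum.inl i) := by rw [← hu1]; exact hadj
        exact (SimpleGraph.ConnectedComponent.sound hadj2.symm.reachable).trans hvK
    · -- injective on
      intro v hv v' hv' hfv
      simp only [Finset.mem_coe, Finset.mem_erase, Finset.mem_filter, Finset.mem_univ,
        true_and] at hv hv'
      obtain ⟨hvr, hvK⟩ := hv
      obtain ⟨hv'r, hv'K⟩ := hv'
      by_contra hne
      have hex := key v hvK hvr
      have hex' := key v' hv'K hv'r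
      rw [hf] at hfv
      simp only [dif_pos hex, dif_pos hex'] at hfv
      obtain ⟨hadj, hdist⟩ := hex.choose_spec
      obtain ⟨hadj', hdist'⟩ := hex'.choose_spec
      generalize hgen : hex.choose = u at hadj hdist hfv
      generalize hgen' : hex'.choose = u' at hadj' hdist' hfv
      have hswap : u = v' ∧ u' = v := by
        rcases dsaGraph_adj_cases A hadj with ⟨i, j, e1, e2, _⟩ | ⟨i, j, e1, e2, _⟩ <;>
          rcases dsaGraph_adj_cases A hadj' with ⟨i', j', e1', e2', _⟩ | ⟨i', j', e1', e2', _⟩ <;>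
            rw [e1, e2, e1', e2'] at hfv ⊢ <;>
              simp only [pairOf_inl_inr, pairOf_inr_inl, Prod.mk.injEq] at hfv
        · exact absurd (e1.trans (by rw [hfv.1, ← e1'])) hne
        · exact ⟨by rw [hfv.2], by rw [hfv.1]⟩
        · exact ⟨by rw [hfv.1], by rw [hfv.2]⟩
        · exact absurd (e1.trans (by rw [hfv.2, ← e1'])) hne
      rw [hswap.1] at hdist
      rw [hswap.2] at hdist'
      omega
  have hrmem : K.out ∈ (univ.filter fun v : Fin n ⊕ Fin m =>
      (dsaGraph A).connectedComponentMk v = K) := by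
    simp [hrK]
  have := Finset.card_erase_of_mem hrmem
  omega
/-- Nonzero entries connect components. -/
lemma comp_eq_of_ne {i : Fin n} {j : Fin m} (h : A i j ≠ 0) :
    (dsaGraph A).connectedComponentMk (.inl i) = (dsaGraph A).connectedComponentMk (.inr j) :=
  SimpleGraph.ConnectedComponent.sound ((dsaGraph_adj_inl_inr A).mpr h).reachable

def sumSubtypeEquiv {α β : Type*} (P : α ⊕ β → Prop) :
    {x // P x} ≃ {a // P (Sum.inl a)} ⊕ {b // P (Sum.inr b)} where
  toFun := fun x => match x with
    | ⟨.inl a, h⟩ => .inl ⟨a, h⟩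
    | ⟨.inr b, h⟩ => .inr ⟨b, h⟩
  invFun := fun s => match s with
    | .inl ⟨a, h⟩ => ⟨.inl a, h⟩
    | .inr ⟨b, h⟩ => ⟨.inr b, h⟩
  left_inv := by rintro ⟨x | x, h⟩ <;> rfl
  right_inv := by rintro (⟨a, h⟩ | ⟨b, h⟩) <;> rfl

open scoped Classical in
lemma filter_sum_card_split (P : Fin n ⊕ Fin m → Prop) :
    (univ.filter fun v : Fin n ⊕ Fin m => P v).card
      = (univ.filter fun i : Fin n => P (.inl i)).card
        + (univ.filter fun j : Fin m => P (.inr j)).card := by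
  classical
  rw [← Fintype.card_subtype, ← Fintype.card_subtype, ← Fintype.card_subtype,
    Fintype.card_congr (sumSubtypeEquiv P), Fintype.card_sum]

open scoped Classical in
/-- Double counting: a component with `r` rows and `c` columns satisfies `r·m = c·n`. -/
lemma comp_ratio (hA : IsDSA n m A) (K : (dsaGraph A).ConnectedComponent) :
    ((univ.filter fun i : Fin n =>
        (dsaGraph A).connectedComponentMk (.inl i) = K).card : ℝ) * m
      = ((univ.filter fun j : Fin m =>
        (dsaGraph A).connectedComponentMk (.inr j) = K).card : ℝ) * n := by
  classical
  obtain ⟨hpos, hcol, hrow⟩ := hA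
  have step1 : ((univ.filter fun i : Fin n =>
      (dsaGraph A).connectedComponentMk (.inl i) = K).card : ℝ) * m
      = ∑ i ∈ univ.filter (fun i : Fin n =>
          (dsaGraph A).connectedComponentMk (.inl i) = K), ∑ j, A i j := by
    rw [Finset.sum_congr rfl fun i _ => hrow i, Finset.sum_const, nsmul_eq_mul]
  have inner : ∀ j : Fin m, ∑ i ∈ univ.filter (fun i : Fin n =>
      (dsaGraph A).connectedComponentMk (.inl i) = K), A i j
      = if (dsaGraph A).connectedComponentMk (.inr j) = K then (n : ℝ) else 0 := by
    intro j
    by_cases hj : (dsaGraph A).connectedComponentMk (.inr j) = K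
    · rw [if_pos hj, ← hcol j]
      apply Finset.sum_subset (Finset.filter_subset _ _)
      intro i _ hi
      simp only [Finset.mem_filter, Finset.mem_univ, true_and] at hi
      by_contra hne
      exact hi ((comp_eq_of_ne A hne).trans hj)
    · rw [if_neg hj]
      apply Finset.sum_eq_zero
      intro i hi
      simp only [Finset.mem_filter, Finset.mem_univ, true_and] at hi
      by_contra hne
      exact hj ((comp_eq_of_ne A hne).symm.trans hi)
  calc ((univ.filter fun i : Fin n =>
      (dsaGraph A).connectedComponentMk (.inl i) = K).card : ℝ) * m
      = ∑ i ∈ univ.filter (fun i : Fin n =>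
          (dsaGraph A).connectedComponentMk (.inl i) = K), ∑ j, A i j := step1
    _ = ∑ j, ∑ i ∈ univ.filter (fun i : Fin n =>
          (dsaGraph A).connectedComponentMk (.inl i) = K), A i j := Finset.sum_comm
    _ = ∑ j, (if (dsaGraph A).connectedComponentMk (.inr j) = K then (n : ℝ) else 0) :=
        Finset.sum_congr rfl fun j _ => inner j
    _ = ∑ j ∈ univ.filter (fun j : Fin m =>
          (dsaGraph A).connectedComponentMk (.inr j) = K), (n : ℝ) :=
        (Finset.sum_filter _ _).symm
    _ = _ := by rw [Finset.sum_const, nsmul_eq_mul]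

open scoped Classical in
lemma suppCard_eq_filter (n m : ℕ) (A : Matrix (Fin n) (Fin m) ℝ) :
    suppCard n m A = (univ.filter fun x : Fin n × Fin m => A x.1 x.2 ≠ 0).card := by
  classical
  rw [suppCard, ← Set.ncard_coe_finset]
  congr 1
  ext x
  simp [matSupp]

lemma blockIdx_injective (d p : ℕ) :
    Function.Injective (fun x : Fin d × Fin p => blockIdx x.1 x.2) := by
  rintro ⟨⟨k, hk⟩, ⟨a, ha⟩⟩ ⟨⟨k', hk'⟩, ⟨a', ha'⟩⟩ h
  simp only [blockIdx, Fin.mk.injEq, Prod.mk.injEq] at h ⊢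
  rcases lt_trichotomy k k' with hlt | heq | hgt
  · exfalso; nlinarith
  · subst heq; omega
  · exfalso; nlinarith

/-- The block equivalence `Fin d × Fin p ≃ Fin n` given `n = d * p`. -/
noncomputable def blockProdEquiv (d p n : ℕ) (hp : n = d * p) : Fin d × Fin p ≃ Fin n :=
  (Equiv.ofBijective (fun x : Fin d × Fin p => blockIdx x.1 x.2)
    ((Fintype.bijective_iff_injective_and_card _).mpr
      ⟨blockIdx_injective d p, by simp⟩)).trans (finCongr hp.symm)

lemma blockProdEquiv_apply (d p n : ℕ) (hp : n = d * p) (k : Fin d) (a : Fin p) :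
    blockProdEquiv d p n hp (k, a) = Fin.cast hp.symm (blockIdx k a) := rfl

open Finset SimpleGraph in
open scoped Classical in
lemma forward_direction (n m d p q : ℕ) (hn : 0 < n) (hm : 0 < m)
    (hd : d = Nat.gcd n m) (hp : n = d * p) (hq : m = d * q)
    (A : Matrix (Fin n) (Fin m) ℝ) (hA : IsDSA n m A)
    (hsupp : (univ.filter fun x : Fin n × Fin m => A x.1 x.2 ≠ 0).card = n + m - d) :
    ∃ (σ : Equiv.Perm (Fin n)) (τ : Equiv.Perm (Fin m))
      (B : Fin d → Matrix (Fin p) (Fin q) ℝ),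
      (∀ k, IsDSA p q (B k) ∧ suppCard p q (B k) = p + q - 1) ∧
      ∀ (k : Fin d) (a : Fin p) (l : Fin d) (b : Fin q),
        A (σ (Fin.cast hp.symm (blockIdx k a))) (τ (Fin.cast hq.symm (blockIdx l b))) =
          if k = l then (d : ℝ) * B k a b else 0 := by
  classical
  haveI : Fintype (dsaGraph A).ConnectedComponent := Fintype.ofFinite _
  -- positivity facts
  have hd0 : 0 < d := by
    rw [hd]
    rcases Nat.eq_zero_or_pos (Nat.gcd n m) with h | h
    · exact absurd (Nat.gcd_eq_zero_iff.mp h).1 (by omega)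
    · exact h
  have hp0 : 0 < p := by
    rcases Nat.eq_zero_or_pos p with h | h
    · rw [h, Nat.mul_zero] at hp; omega
    · exact h
  have hq0 : 0 < q := by
    rcases Nat.eq_zero_or_pos q with h | h
    · rw [h, Nat.mul_zero] at hq; omega
    · exact h
  have hpq : Nat.Coprime p q := by
    have h1 : p = n / Nat.gcd n m := by rw [← hd, hp, Nat.mul_div_cancel_left _ hd0]
    have h2 : q = m / Nat.gcd n m := by rw [← hd, hq, Nat.mul_div_cancel_left _ hd0]
    rw [h1, h2]
    exact Nat.coprime_div_gcd_div_gcd (hd ▸ hd0)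
  set comp : (Fin n ⊕ Fin m) → (dsaGraph A).ConnectedComponent :=
    fun v => (dsaGraph A).connectedComponentMk v with hcomp
  set RK : (dsaGraph A).ConnectedComponent → Finset (Fin n) :=
    fun K => univ.filter fun i : Fin n => comp (.inl i) = K with hRK
  set CK : (dsaGraph A).ConnectedComponent → Finset (Fin m) :=
    fun K => univ.filter fun j : Fin m => comp (.inr j) = K with hCK
  set EK : (dsaGraph A).ConnectedComponent → Finset (Fin n × Fin m) :=
    fun K => univ.filter fun x : Fin n × Fin m =>
      A x.1 x.2 ≠ 0 ∧ comp (.inl x.1) = K with hEK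
  -- fiberwise counting
  have hsumR : ∑ K, (RK K).card = n := by
    have h := Finset.card_eq_sum_card_fiberwise (s := (univ : Finset (Fin n))) (t := univ)
      (f := fun i : Fin n => comp (.inl i)) (fun x _ => Finset.mem_univ _)
    simpa using h.symm
  have hsumC : ∑ K, (CK K).card = m := by
    have h := Finset.card_eq_sum_card_fiberwise (s := (univ : Finset (Fin m))) (t := univ)
      (f := fun j : Fin m => comp (.inr j)) (fun x _ => Finset.mem_univ _)
    simpa using h.symm
  have hsumE : ∑ K, (EK K).card = n + m - d := by
    rw [← hsupp, Finset.card_eq_sum_card_fiberwise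
      (f := fun x : Fin n × Fin m => comp (.inl x.1)) (t := univ) (fun x _ => Finset.mem_univ _)]
    congr 1
    ext K
    congr 1
    rw [Finset.filter_filter]
  -- connectivity bound
  have hbound : ∀ K, (RK K).card + (CK K).card ≤ (EK K).card + 1 := by
    intro K
    have := comp_card_bound A hn hm K
    rwa [filter_sum_card_split (fun v => (dsaGraph A).connectedComponentMk v = K)] at this
  -- ratio
  have hratio : ∀ K, (RK K).card * q = (CK K).card * p := by
    intro K
    have h1 : ((RK K).card : ℝ) * m = ((CK K).card : ℝ) * n := comp_ratio A hA K
    have h2 : (RK K).card * m = (CK K).card * n := by exact_mod_cast h1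
    have h3 : d * ((RK K).card * q) = d * ((CK K).card * p) := by
      calc d * ((RK K).card * q) = (RK K).card * (d * q) := by ring
        _ = (RK K).card * m := by rw [← hq]
        _ = (CK K).card * n := h2
        _ = (CK K).card * (d * p) := by rw [hp]
        _ = d * ((CK K).card * p) := by ring
    exact Nat.eq_of_mul_eq_mul_left hd0 h3
  -- each component has a row
  have hRpos : ∀ K, 0 < (RK K).card := by
    intro K
    obtain ⟨v, hv⟩ := K.exists_rep
    have hrow : ∃ i : Fin n, comp (.inl i) = K := by
      rcases v with i | j
      · exact ⟨i, hv⟩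
      · have hcol : ∑ i, A i j = (n : ℝ) := hA.2.1 j
        have : ∃ i, A i j ≠ 0 := by
          by_contra hno
          push_neg at hno
          rw [Finset.sum_eq_zero (fun i _ => hno i)] at hcol
          exact absurd hcol.symm (by positivity)
        obtain ⟨i, hi⟩ := this
        exact ⟨i, (comp_eq_of_ne A hi).trans hv⟩
    obtain ⟨i, hi⟩ := hrow
    exact Finset.card_pos.mpr ⟨i, by simp [hRK, hi]⟩
  -- arithmetic of the equality case
  set t : (dsaGraph A).ConnectedComponent → ℕ := fun K => (RK K).card / p with ht
  have htR : ∀ K, (RK K).card = t K * p := by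
    intro K
    have hdvd : p ∣ (RK K).card :=
      (Nat.Coprime.dvd_of_dvd_mul_right hpq) ⟨(CK K).card, by rw [hratio K]; ring⟩
    rw [ht]
    exact (Nat.div_mul_cancel hdvd).symm
  have htC : ∀ K, (CK K).card = t K * q := by
    intro K
    have h1 : ((CK K).card) * p = (t K * q) * p := by
      rw [← hratio K, htR K]; ring
    exact Nat.eq_of_mul_eq_mul_right hp0 h1
  have ht1 : ∀ K, 1 ≤ t K := by
    intro K
    have := hRpos K
    rw [htR K] at this
    rcases Nat.eq_zero_or_pos (t K) with h | h
    · rw [h] at this; simp at this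
    · exact h
  have hsumt : (∑ K, t K) = d := by
    apply Nat.eq_of_mul_eq_mul_right hp0
    calc (∑ K, t K) * p = ∑ K, t K * p := Finset.sum_mul _ _ _
      _ = ∑ K, (RK K).card := Finset.sum_congr rfl fun K _ => (htR K).symm
      _ = n := hsumR
      _ = d * p := hp
  have hdn : d ≤ n := by
    calc d = d * 1 := (Nat.mul_one d).symm
    _ ≤ d * p := Nat.mul_le_mul_left d hp0
    _ = n := hp.symm
  set c : ℕ := Fintype.card (dsaGraph A).ConnectedComponent with hc
  have hcd : c ≤ d := by
    rw [← hsumt, hc, Fintype.card_eq_sum_ones]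
    exact Finset.sum_le_sum fun K _ => ht1 K
  have hsumRC : ∑ K, ((RK K).card + (CK K).card) = n + m := by
    rw [Finset.sum_add_distrib, hsumR, hsumC]
  have hsumE1 : ∑ K, ((EK K).card + 1) = (n + m - d) + c := by
    rw [Finset.sum_add_distrib, hsumE, Finset.sum_const, Finset.card_univ, smul_eq_mul,
      Nat.mul_one]
  have htotal : n + m ≤ (n + m - d) + c := by
    calc n + m = ∑ K, ((RK K).card + (CK K).card) := hsumRC.symm
      _ ≤ ∑ K, ((EK K).card + 1) := Finset.sum_le_sum fun K _ => hbound K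
      _ = (n + m - d) + c := hsumE1
  have hceq : c = d := by omega
  have hsums_eq : ∑ K, ((RK K).card + (CK K).card) = ∑ K, ((EK K).card + 1) := by
    rw [hsumRC, hsumE1, hceq]; omega
  have heq1 : ∀ K, (RK K).card + (CK K).card = (EK K).card + 1 := by
    intro K
    have := (Finset.sum_eq_sum_iff_of_le (fun K _ => hbound K)).mp hsums_eq
    exact this K (Finset.mem_univ K)
  have heqt : ∀ K, t K = 1 := by
    intro K
    have hs : ∑ _K : (dsaGraph A).ConnectedComponent, (1 : ℕ) = ∑ K, t K := by
      rw [hsumt]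
      simpa using hceq
    exact ((Finset.sum_eq_sum_iff_of_le (fun K _ => ht1 K)).mp hs K (Finset.mem_univ K)).symm
  have hRcard : ∀ K, (RK K).card = p := fun K => by rw [htR K, heqt K, Nat.one_mul]
  have hCcard : ∀ K, (CK K).card = q := fun K => by rw [htC K, heqt K, Nat.one_mul]
  have hEcard : ∀ K, (EK K).card = p + q - 1 := by
    intro K
    have h1 := heq1 K
    rw [hRcard K, hCcard K] at h1
    omega
  -- build the equivalences
  have hcards : Fintype.card (dsaGraph A).ConnectedComponent = d := hceq
  set ecomp : Fin d ≃ (dsaGraph A).ConnectedComponent :=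
    (Fintype.equivFinOfCardEq hcards).symm with hecomp
  have hrowcard : ∀ k : Fin d,
      Fintype.card {i : Fin n // comp (.inl i) = ecomp k} = p := by
    intro k
    rw [Fintype.card_subtype]
    exact hRcard (ecomp k)
  have hcolcard : ∀ k : Fin d,
      Fintype.card {j : Fin m // comp (.inr j) = ecomp k} = q := by
    intro k
    rw [Fintype.card_subtype]
    exact hCcard (ecomp k)
  set rowE : ∀ k : Fin d, Fin p ≃ {i : Fin n // comp (.inl i) = ecomp k} :=
    fun k => (Fintype.equivFinOfCardEq (hrowcard k)).symm with hrowE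
  set colE : ∀ k : Fin d, Fin q ≃ {j : Fin m // comp (.inr j) = ecomp k} :=
    fun k => (Fintype.equivFinOfCardEq (hcolcard k)).symm with hcolE
  set F : Fin d × Fin p → Fin n := fun x => (rowE x.1 x.2 : Fin n) with hF
  set Fc : Fin d × Fin q → Fin m := fun x => (colE x.1 x.2 : Fin m) with hFc
  have hFcomp : ∀ k a, comp (.inl (F (k, a))) = ecomp k := fun k a => (rowE k a).2
  have hFccomp : ∀ k b, comp (.inr (Fc (k, b))) = ecomp k := fun k b => (colE k b).2
  have hFinj : Function.Injective F := by
    rintro ⟨k, a⟩ ⟨k', a'⟩ h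
    have hk : ecomp k = ecomp k' := by
      rw [← hFcomp k a, ← hFcomp k' a', h]
    have hkk : k = k' := ecomp.injective hk
    subst hkk
    have : rowE k a = rowE k a' := Subtype.ext h
    rw [Prod.mk.injEq]
    exact ⟨rfl, (rowE k).injective this⟩
  have hFcinj : Function.Injective Fc := by
    rintro ⟨k, b⟩ ⟨k', b'⟩ h
    have hk : ecomp k = ecomp k' := by
      rw [← hFccomp k b, ← hFccomp k' b', h]
    have hkk : k = k' := ecomp.injective hk
    subst hkk
    have : colE k b = colE k b' := Subtype.ext h
    rw [Prod.mk.injEq]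
    exact ⟨rfl, (colE k).injective this⟩
  set FE : Fin d × Fin p ≃ Fin n :=
    Equiv.ofBijective F ((Fintype.bijective_iff_injective_and_card _).mpr
      ⟨hFinj, by simp [hp]⟩) with hFE
  set FcE : Fin d × Fin q ≃ Fin m :=
    Equiv.ofBijective Fc ((Fintype.bijective_iff_injective_and_card _).mpr
      ⟨hFcinj, by simp [hq]⟩) with hFcE
  set σ : Equiv.Perm (Fin n) := (blockProdEquiv d p n hp).symm.trans FE with hσ
  set τ : Equiv.Perm (Fin m) := (blockProdEquiv d q m hq).symm.trans FcE with hτ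
  have hσa : ∀ (k : Fin d) (a : Fin p), σ (Fin.cast hp.symm (blockIdx k a)) = F (k, a) := by
    intro k a
    rw [hσ, ← blockProdEquiv_apply d p n hp]
    simp [hFE]
  have hτa : ∀ (l : Fin d) (b : Fin q), τ (Fin.cast hq.symm (blockIdx l b)) = Fc (l, b) := by
    intro l b
    rw [hτ, ← blockProdEquiv_apply d q m hq]
    simp [hFcE]
  have hdR : (d : ℝ) ≠ 0 := Nat.cast_ne_zero.mpr (by omega)
  set B : Fin d → Matrix (Fin p) (Fin q) ℝ :=
    fun k a b => A (F (k, a)) (Fc (k, b)) / d with hB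
  refine ⟨σ, τ, B, ?_, ?_⟩
  · -- each block is a DSA with support p + q - 1
    intro k
    have hzeroR : ∀ (i : Fin n) (j : Fin m), comp (.inl i) = ecomp k →
        comp (.inr j) ≠ ecomp k → A i j = 0 := by
      intro i j hi hj
      by_contra hne
      exact hj ((comp_eq_of_ne A hne).symm.trans hi)
    have hzeroC : ∀ (i : Fin n) (j : Fin m), comp (.inr j) = ecomp k →
        comp (.inl i) ≠ ecomp k → A i j = 0 := by
      intro i j hj hi
      by_contra hne
      exact hi ((comp_eq_of_ne A hne).trans hj)
    refine ⟨⟨?_, ?_, ?_⟩, ?_⟩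
    · -- nonneg
      intro a b
      exact div_nonneg (hA.1 _ _) (Nat.cast_nonneg d)
    · -- column sums
      intro b
      have key : ∑ a, A (F (k, a)) (Fc (k, b)) = (n : ℝ) := by
        have e1 : ∑ a, A (F (k, a)) (Fc (k, b))
            = ∑ x : {i : Fin n // comp (.inl i) = ecomp k}, A x.1 (Fc (k, b)) :=
          Fintype.sum_equiv (rowE k) _ _ (fun a => rfl)
        have e2 : ∑ x : {i : Fin n // comp (.inl i) = ecomp k}, A x.1 (Fc (k, b))
            = ∑ i ∈ univ.filter (fun i : Fin n => comp (.inl i) = ecomp k),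
                A i (Fc (k, b)) :=
          (Finset.sum_subtype (univ.filter fun i : Fin n => comp (.inl i) = ecomp k)
            (fun x => by simp) (fun i => A i (Fc (k, b)))).symm
        have e3 : ∑ i ∈ univ.filter (fun i : Fin n => comp (.inl i) = ecomp k),
            A i (Fc (k, b)) = ∑ i, A i (Fc (k, b)) := by
          apply Finset.sum_subset (Finset.filter_subset _ _)
          intro i _ hi
          simp only [Finset.mem_filter, Finset.mem_univ, true_and] at hi
          exact hzeroC i _ (hFccomp k b) hi
        rw [e1, e2, e3, hA.2.1]
      have : ∑ a, B k a b = (n : ℝ) / d := by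
        rw [hB, ← Finset.sum_div, key]
      rw [this, hp]
      push_cast
      field_simp
    · -- row sums
      intro a
      have key : ∑ b, A (F (k, a)) (Fc (k, b)) = (m : ℝ) := by
        have e1 : ∑ b, A (F (k, a)) (Fc (k, b))
            = ∑ x : {j : Fin m // comp (.inr j) = ecomp k}, A (F (k, a)) x.1 :=
          Fintype.sum_equiv (colE k) _ _ (fun b => rfl)
        have e2 : ∑ x : {j : Fin m // comp (.inr j) = ecomp k}, A (F (k, a)) x.1
            = ∑ j ∈ univ.filter (fun j : Fin m => comp (.inr j) = ecomp k),
                A (F (k, a)) j :=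
          (Finset.sum_subtype (univ.filter fun j : Fin m => comp (.inr j) = ecomp k)
            (fun x => by simp) (fun j => A (F (k, a)) j)).symm
        have e3 : ∑ j ∈ univ.filter (fun j : Fin m => comp (.inr j) = ecomp k),
            A (F (k, a)) j = ∑ j, A (F (k, a)) j := by
          apply Finset.sum_subset (Finset.filter_subset _ _)
          intro j _ hj
          simp only [Finset.mem_filter, Finset.mem_univ, true_and] at hj
          exact hzeroR _ j (hFcomp k a) hj
        rw [e1, e2, e3, hA.2.2]
      have : ∑ b, B k a b = (m : ℝ) / d := by
        rw [hB, ← Finset.sum_div, key]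
      rw [this, hq]
      push_cast
      field_simp
    · -- support of the block
      rw [suppCard_eq_filter]
      have hbij : (univ.filter fun ab : Fin p × Fin q => B k ab.1 ab.2 ≠ 0).card
          = (EK (ecomp k)).card := by
        apply Finset.card_bij (fun ab _ => (F (k, ab.1), Fc (k, ab.2)))
        · intro ab hab
          simp only [Finset.mem_filter, Finset.mem_univ, true_and, hB] at hab
          simp only [hEK, Finset.mem_filter, Finset.mem_univ, true_and]
          have hAne : A (F (k, ab.1)) (Fc (k, ab.2)) ≠ 0 := by
            intro h0
            exact hab (by rw [h0, zero_div])
          exact ⟨hAne, hFcomp k ab.1⟩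
        · intro ab hab ab' hab' h
          rw [Prod.mk.injEq] at h
          have h1 : (k, ab.1) = (k, ab'.1) := hFinj h.1
          have h2 : (k, ab.2) = (k, ab'.2) := hFcinj h.2
          rw [Prod.mk.injEq] at h1 h2
          exact Prod.ext h1.2 h2.2
        · intro x hx
          simp only [hEK, Finset.mem_filter, Finset.mem_univ, true_and] at hx
          obtain ⟨hxne, hxcomp⟩ := hx
          have hxcomp2 : comp (.inr x.2) = ecomp k :=
            (comp_eq_of_ne A hxne).symm.trans hxcomp
          set a : Fin p := (rowE k).symm ⟨x.1, hxcomp⟩ with ha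
          set b : Fin q := (colE k).symm ⟨x.2, hxcomp2⟩ with hb
          have hFa : F (k, a) = x.1 := by
            rw [hF, ha]
            simp
          have hFb : Fc (k, b) = x.2 := by
            rw [hFc, hb]
            simp
          refine ⟨(a, b), ?_, ?_⟩
          · simp only [Finset.mem_filter, Finset.mem_univ, true_and, hB]
            simp only [hFa, hFb]
            exact div_ne_zero hxne hdR
          · rw [hFa, hFb]
      rw [hbij, hEcard]
  · -- block equation
    intro k a l b
    rw [hσa, hτa]
    by_cases hkl : k = l
    · subst hkl
      rw [if_pos rfl, hB]
      field_simp
    · rw [if_neg hkl]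
      by_contra hne
      have hcc : comp (.inl (F (k, a))) = comp (.inr (Fc (l, b))) := comp_eq_of_ne A hne
      rw [hFcomp k a, hFccomp l b] at hcc
      exact hkl (ecomp.injective hcc)

open Finset in
open scoped Classical in
lemma suppCard_eq_card (n m : ℕ) (A : Matrix (Fin n) (Fin m) ℝ) :
    suppCard n m A = Fintype.card {x : Fin n × Fin m // A x.1 x.2 ≠ 0} := by
  rw [suppCard_eq_filter, Fintype.card_subtype]

open Finset in
open scoped Classical in
lemma backward_direction (n m d p q : ℕ) (hn : 0 < n) (hm : 0 < m)
    (hp : n = d * p) (hq : m = d * q)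
    (A : Matrix (Fin n) (Fin m) ℝ)
    (σ : Equiv.Perm (Fin n)) (τ : Equiv.Perm (Fin m))
    (B : Fin d → Matrix (Fin p) (Fin q) ℝ)
    (hB : ∀ k, suppCard p q (B k) = p + q - 1)
    (hblock : ∀ (k : Fin d) (a : Fin p) (l : Fin d) (b : Fin q),
        A (σ (Fin.cast hp.symm (blockIdx k a))) (τ (Fin.cast hq.symm (blockIdx l b))) =
          if k = l then (d : ℝ) * B k a b else 0) :
    suppCard n m A = n + m - d := by
  classical
  have hd0 : 0 < d := by
    rcases Nat.eq_zero_or_pos d with h | h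
    · rw [h, Nat.zero_mul] at hp; omega
    · exact h
  have hp0 : 0 < p := by
    rcases Nat.eq_zero_or_pos p with h | h
    · rw [h, Nat.mul_zero] at hp; omega
    · exact h
  have hdR : (d : ℝ) ≠ 0 := Nat.cast_ne_zero.mpr (by omega)
  set E : (Fin d × Fin p) × (Fin d × Fin q) ≃ Fin n × Fin m :=
    Equiv.prodCongr ((blockProdEquiv d p n hp).trans σ)
      ((blockProdEquiv d q m hq).trans τ) with hE
  have h1 : ∀ y : (Fin d × Fin p) × (Fin d × Fin q),
      A (E y).1 (E y).2 = if y.1.1 = y.2.1 then (d : ℝ) * B y.1.1 y.1.2 y.2.2 else 0 := by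
    rintro ⟨⟨k, a⟩, ⟨l, b⟩⟩
    have : E ((k, a), (l, b))
        = (σ (Fin.cast hp.symm (blockIdx k a)), τ (Fin.cast hq.symm (blockIdx l b))) := rfl
    rw [this]
    exact hblock k a l b
  have h2 : ∀ y : (Fin d × Fin p) × (Fin d × Fin q),
      (A (E y).1 (E y).2 ≠ 0) ↔ (y.1.1 = y.2.1 ∧ B y.1.1 y.1.2 y.2.2 ≠ 0) := by
    intro y
    rw [h1 y]
    by_cases hkl : y.1.1 = y.2.1
    · rw [if_pos hkl]
      simp [hkl, hdR]
    · rw [if_neg hkl]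
      simp [hkl]
  have hcong1 : Fintype.card {x : Fin n × Fin m // A x.1 x.2 ≠ 0}
      = Fintype.card {y : (Fin d × Fin p) × (Fin d × Fin q) //
          y.1.1 = y.2.1 ∧ B y.1.1 y.1.2 y.2.2 ≠ 0} := by
    apply Fintype.card_congr
    exact (Equiv.subtypeEquiv E (fun y => Iff.rfl)).symm.trans
      (Equiv.subtypeEquivRight h2)
  set SE : {y : (Fin d × Fin p) × (Fin d × Fin q) //
      y.1.1 = y.2.1 ∧ B y.1.1 y.1.2 y.2.2 ≠ 0}
      ≃ Σ k : Fin d, {ab : Fin p × Fin q // B k ab.1 ab.2 ≠ 0} := {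
    toFun := fun y => ⟨y.val.1.1, ⟨(y.val.1.2, y.val.2.2), y.prop.2⟩⟩
    invFun := fun s => ⟨((s.1, s.2.val.1), (s.1, s.2.val.2)), rfl, s.2.prop⟩
    left_inv := by
      rintro ⟨⟨⟨k, a⟩, ⟨l, b⟩⟩, hkl, hBne⟩
      cases hkl
      rfl
    right_inv := by rintro ⟨k, ⟨⟨a, b⟩, h⟩⟩; rfl }
  have hcard : suppCard n m A = ∑ k : Fin d, suppCard p q (B k) := by
    rw [suppCard_eq_card, hcong1, Fintype.card_congr SE, Fintype.card_sigma]
    refine Finset.sum_congr rfl fun k _ => ?_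
    rw [suppCard_eq_card]
  rw [hcard]
  have hsum : ∑ k : Fin d, suppCard p q (B k) = d * (p + q - 1) := by
    rw [Finset.sum_congr rfl (fun k _ => hB k), Finset.sum_const, Finset.card_univ,
      Fintype.card_fin, smul_eq_mul]
  rw [hsum]
  have harith : d * (p + q - 1) + d = n + m := by
    have hpq1 : p + q - 1 + 1 = p + q := by omega
    calc d * (p + q - 1) + d = d * ((p + q - 1) + 1) := by ring
      _ = d * (p + q) := by rw [hpq1]
      _ = d * p + d * q := by ring
      _ = n + m := by rw [← hp, ← hq]
  omega

end Aux

/-- With `d = gcd(n,m)`, `n = d·p`, `m = d·q`, a doubly stochastic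
array `A ∈ S(n,m)` has support of size `n + m − d` if and only if, after suitable
permutations of rows and columns, `A` is `d` times a block diagonal matrix with
blocks `A₁, …, A_d`, each a `p × q` doubly stochastic array of support size
`p + q − 1`. -/
theorem support_minimal_iff_block_diagonal (n m d p q : ℕ) (hn : 0 < n) (hm : 0 < m)
    (hd : d = Nat.gcd n m) (hp : n = d * p) (hq : m = d * q)
    (A : Matrix (Fin n) (Fin m) ℝ) (hA : IsDSA n m A) :
    suppCard n m A = n + m - d ↔
      ∃ (σ : Equiv.Perm (Fin n)) (τ : Equiv.Perm (Fin m))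
        (B : Fin d → Matrix (Fin p) (Fin q) ℝ),
        (∀ k, IsDSA p q (B k) ∧ suppCard p q (B k) = p + q - 1) ∧
        ∀ (k : Fin d) (a : Fin p) (l : Fin d) (b : Fin q),
          A (σ (Fin.cast hp.symm (blockIdx k a))) (τ (Fin.cast hq.symm (blockIdx l b))) =
            if k = l then (d : ℝ) * B k a b else 0 := by
  constructor
  · intro h
    exact forward_direction n m d p q hn hm hd hp hq A hA
      (by rw [← suppCard_eq_filter]; exact h)
  · rintro ⟨σ, τ, B, hB, hblock⟩
    exact backward_direction n m d p q hn hm hp hq A σ τ B (fun k => (hB k).2) hblock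
end

section
/- For all positive integers n and m, the support size of any extremal n × m doubly stochastic array is of the form n + m − s, where s is an integer satisfying 1 ≤ s ≤ gcd(n, m). -/
section Aux

open Relation

open Relation

lemma eqvGen_false {α : Type*} {x y : α}
    (h : EqvGen (fun _ _ => False) x y) : x = y := by
  induction h with
  | rel _ _ h => exact h.elim
  | refl => rfl
  | symm _ _ _ ih => exact ih.symm
  | trans _ _ _ _ _ ih1 ih2 => exact ih1.trans ih2

lemma eqvGen_insert_iff {α : Type*} (r : α → α → Prop) (a b : α) (x y : α) :
    EqvGen (fun u v => r u v ∨ (u = a ∧ v = b)) x y ↔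
      EqvGen r x y ∨
      (EqvGen r x a ∧ EqvGen r b y) ∨
      (EqvGen r x b ∧ EqvGen r a y) := by
  constructor
  · intro h
    induction h with
    | rel u v h =>
      rcases h with h | ⟨rfl, rfl⟩
      · exact Or.inl (EqvGen.rel _ _ h)
      · exact Or.inr (Or.inl ⟨EqvGen.refl _, EqvGen.refl _⟩)
    | refl u => exact Or.inl (EqvGen.refl u)
    | symm u v _ ih =>
      rcases ih with h | ⟨h1, h2⟩ | ⟨h1, h2⟩
      · exact Or.inl (EqvGen.symm _ _ h)
      · exact Or.inr (Or.inr ⟨EqvGen.symm _ _ h2, EqvGen.symm _ _ h1⟩)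
      · exact Or.inr (Or.inl ⟨EqvGen.symm _ _ h2, EqvGen.symm _ _ h1⟩)
    | trans u v w _ _ ih1 ih2 =>
      rcases ih1 with h | ⟨h1, h2⟩ | ⟨h1, h2⟩ <;>
        rcases ih2 with h' | ⟨h1', h2'⟩ | ⟨h1', h2'⟩
      · exact Or.inl (EqvGen.trans _ _ _ h h')
      · exact Or.inr (Or.inl ⟨EqvGen.trans _ _ _ h h1', h2'⟩)
      · exact Or.inr (Or.inr ⟨EqvGen.trans _ _ _ h h1', h2'⟩)
      · exact Or.inr (Or.inl ⟨h1, EqvGen.trans _ _ _ h2 h'⟩)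
      · -- x~a, b~v ; v~a, b~w : x ~ a ~ ? use b~v, v~a gives b~a; x~a ~ b? 
        -- x~a, a~b (symm of b~a), b~w : x~w
        exact Or.inl (EqvGen.trans _ _ _ (EqvGen.trans _ _ _ h1
          (EqvGen.symm _ _ (EqvGen.trans _ _ _ h2 h1'))) h2')
      · -- x~a, b~v ; v~b, a~w : x~a~w
        exact Or.inl (EqvGen.trans _ _ _ h1 h2')
      · exact Or.inr (Or.inr ⟨h1, EqvGen.trans _ _ _ h2 h'⟩)
      · -- x~b, a~v ; v~a, b~w : x~b~w
        exact Or.inl (EqvGen.trans _ _ _ h1 h2')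
      · -- x~b, a~v ; v~b, a~w : a~v~b so b~a? x~b ~ (a~b).symm... x~b, b~a, a~w
        exact Or.inl (EqvGen.trans _ _ _ (EqvGen.trans _ _ _ h1
          (EqvGen.symm _ _ (EqvGen.trans _ _ _ h2 h1'))) h2')
  · have hmono : ∀ {u v : α}, EqvGen r u v →
        EqvGen (fun u v => r u v ∨ (u = a ∧ v = b)) u v :=
      fun h => Relation.EqvGen.mono (fun _ _ h' => Or.inl h') _ _ h
    have hab : EqvGen (fun u v => r u v ∨ (u = a ∧ v = b)) a b :=
      EqvGen.rel _ _ (Or.inr ⟨rfl, rfl⟩)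
    rintro (h | ⟨h1, h2⟩ | ⟨h1, h2⟩)
    · exact hmono h
    · exact EqvGen.trans _ _ _ (EqvGen.trans _ _ _ (hmono h1) hab) (hmono h2)
    · exact EqvGen.trans _ _ _ (EqvGen.trans _ _ _ (hmono h1)
        (EqvGen.symm _ _ hab)) (hmono h2)

lemma card_quot_insert {α : Type*} [Finite α] (r : α → α → Prop) (a b : α) :
    Nat.card (Quotient (EqvGen.setoid r)) ≤
    Nat.card (Quotient (EqvGen.setoid (fun u v => r u v ∨ (u = a ∧ v = b)))) + 1 := by
  classical
  letI : Fintype (Quotient (EqvGen.setoid r)) := Fintype.ofFinite _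
  letI : Fintype (Quotient (EqvGen.setoid (fun u v => r u v ∨ (u = a ∧ v = b)))) :=
    Fintype.ofFinite _
  set s := EqvGen.setoid r with hs
  set s' := EqvGen.setoid (fun u v => r u v ∨ (u = a ∧ v = b)) with hs'
  let f : Quotient s → Quotient s' :=
    Quotient.map' id (fun x y h => Relation.EqvGen.mono (fun _ _ h' => Or.inl h') _ _ h)
  have hinj : ∀ x y : Quotient s, x ≠ Quotient.mk'' a → y ≠ Quotient.mk'' a →
      f x = f y → x = y := by
    intro x y hx hy hxy
    induction x using Quotient.inductionOn' with | h u =>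
    induction y using Quotient.inductionOn' with | h v =>
    have h' : EqvGen (fun u v => r u v ∨ (u = a ∧ v = b)) u v := by
      exact Quotient.exact' hxy
    rcases (eqvGen_insert_iff r a b u v).1 h' with h | ⟨h1, _⟩ | ⟨_, h2⟩
    · exact Quotient.sound' h
    · exact absurd (Quotient.sound' h1) hx
    · exact absurd (Quotient.sound' (EqvGen.symm _ _ h2)) hy
  rw [Nat.card_eq_fintype_card, Nat.card_eq_fintype_card]
  have h1 : (Finset.univ.erase (Quotient.mk'' a : Quotient s)).card ≤
      Fintype.card (Quotient s') := by
    apply Finset.card_le_card_of_injOn f (fun x _ => Finset.mem_univ _)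
    intro x hx y hy hxy
    simp only [Finset.coe_erase, Set.mem_diff, Set.mem_singleton_iff] at hx hy
    exact hinj x y hx.2 hy.2 hxy
  have h2 : (Finset.univ.erase (Quotient.mk'' a : Quotient s)).card =
      Fintype.card (Quotient s) - 1 := by
    rw [Finset.card_erase_of_mem (Finset.mem_univ _), Finset.card_univ]
  haveI : Nonempty (Quotient s) := ⟨Quotient.mk'' a⟩
  have h3 : 1 ≤ Fintype.card (Quotient s) := Fintype.card_pos
  omega

/-- the bipartite relation generated by an edge set -/
def edgeRel {n m : ℕ} (Ω : Finset (Fin n × Fin m)) (x y : Fin n ⊕ Fin m) : Prop :=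
  ∃ p ∈ Ω, x = Sum.inl p.1 ∧ y = Sum.inr p.2

lemma card_quot_edgeRel {n m : ℕ} (Ω : Finset (Fin n × Fin m)) :
    n + m ≤ Nat.card (Quotient (EqvGen.setoid (edgeRel Ω))) + Ω.card := by
  classical
  induction Ω using Finset.induction with
  | empty =>
    have he : edgeRel (∅ : Finset (Fin n × Fin m)) = (fun _ _ => False) := by
      funext x y; simp [edgeRel]
    rw [he, Finset.card_empty]
    have hb : Function.Bijective
        (Quotient.mk'' : Fin n ⊕ Fin m → Quotient (EqvGen.setoid (fun _ _ => False))) := by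
      constructor
      · intro x y h
        exact eqvGen_false (Quotient.exact' h)
      · exact fun q => Quotient.exists_rep q
    rw [← Nat.card_eq_of_bijective _ hb]
    simp [Nat.card_sum]
  | @insert p Ω hp ih =>
    have he : edgeRel (insert p Ω) =
        (fun x y => edgeRel Ω x y ∨ (x = Sum.inl p.1 ∧ y = Sum.inr p.2)) := by
      funext x y
      simp only [edgeRel, Finset.mem_insert, eq_iff_iff]
      constructor
      · rintro ⟨q, (rfl | hq), h⟩
        · exact Or.inr h
        · exact Or.inl ⟨q, hq, h⟩
      · rintro (⟨q, hq, h⟩ | h)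
        · exact ⟨q, Or.inr hq, h⟩
        · exact ⟨p, Or.inl rfl, h⟩
    have := card_quot_insert (edgeRel Ω) (Sum.inl p.1) (Sum.inr p.2)
    rw [he, Finset.card_insert_of_notMem hp]
    omega

lemma lower_bound {n m : ℕ} (hn : 0 < n) (hm : 0 < m)
    {A : Matrix (Fin n) (Fin m) ℝ} (hA : IsDSA n m A)
    (Ω : Finset (Fin n × Fin m)) (hΩ : ∀ p, p ∈ Ω ↔ A p.1 p.2 ≠ 0) :
    n + m ≤ Ω.card + Nat.gcd n m := by
  classical
  set g := Nat.gcd n m with hg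
  set s := EqvGen.setoid (edgeRel Ω) with hsdef
  letI : Fintype (Quotient s) := Fintype.ofFinite _
  set c := Nat.card (Quotient s) with hc
  have hcard := card_quot_edgeRel Ω
  rw [← hsdef] at hcard
  -- it suffices that c ≤ g
  suffices hcg : c ≤ g by omega
  -- the class of an edge's endpoints agree
  have hedge : ∀ i j, A i j ≠ 0 →
      (Quotient.mk'' (Sum.inl i) : Quotient s) = Quotient.mk'' (Sum.inr j) := by
    intro i j h
    exact Quotient.sound' (EqvGen.rel _ _ ⟨(i, j), (hΩ (i, j)).2 h, rfl, rfl⟩)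
  -- row/column fibers
  set R : Quotient s → Finset (Fin n) :=
    fun K => Finset.univ.filter (fun i => (Quotient.mk'' (Sum.inl i) : Quotient s) = K) with hR
  set C : Quotient s → Finset (Fin m) :=
    fun K => Finset.univ.filter (fun j => (Quotient.mk'' (Sum.inr j) : Quotient s) = K) with hC
  -- balance within each class
  have hbal : ∀ K : Quotient s, (R K).card * m = (C K).card * n := by
    intro K
    have key : ∑ i ∈ R K, ∑ j, A i j = ∑ j ∈ C K, ∑ i, A i j := by
      have h1 : ∑ i ∈ R K, ∑ j, A i j = ∑ i ∈ R K, ∑ j ∈ C K, A i j := by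
        apply Finset.sum_congr rfl
        intro i hi
        rw [hR] at hi; simp only [Finset.mem_filter] at hi
        refine (Finset.sum_subset (Finset.subset_univ _) ?_).symm
        intro j _ hj
        by_contra hne
        apply hj
        rw [hC]; simp only [Finset.mem_filter]
        exact ⟨Finset.mem_univ _, (hedge i j hne).symm.trans hi.2 |>.symm ▸ rfl⟩
      have h2 : ∑ j ∈ C K, ∑ i, A i j = ∑ j ∈ C K, ∑ i ∈ R K, A i j := by
        apply Finset.sum_congr rfl
        intro j hj
        rw [hC] at hj; simp only [Finset.mem_filter] at hj
        refine (Finset.sum_subset (Finset.subset_univ _) ?_).symm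
        intro i _ hi
        by_contra hne
        apply hi
        rw [hR]; simp only [Finset.mem_filter]
        exact ⟨Finset.mem_univ _, (hedge i j hne).trans hj.2⟩
      rw [h1, h2, Finset.sum_comm]
    have hL : ∑ i ∈ R K, ∑ j, A i j = ((R K).card : ℝ) * m := by
      rw [Finset.sum_congr rfl (fun i _ => hA.2.2 i), Finset.sum_const, nsmul_eq_mul]
    have hRt : ∑ j ∈ C K, ∑ i, A i j = ((C K).card : ℝ) * n := by
      rw [Finset.sum_congr rfl (fun j _ => hA.2.1 j), Finset.sum_const, nsmul_eq_mul]
    have : ((R K).card : ℝ) * m = ((C K).card : ℝ) * n := by rw [← hL, ← hRt, key]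
    exact_mod_cast this
  -- every class contains at least n/g rows
  have hgpos : 0 < g := Nat.gcd_pos_of_pos_left m hn
  set n' := n / g with hn'
  set m' := m / g with hm'
  have hnn' : n = g * n' := (Nat.mul_div_cancel' (Nat.gcd_dvd_left n m)).symm
  have hmm' : m = g * m' := (Nat.mul_div_cancel' (Nat.gcd_dvd_right n m)).symm
  have hcop : Nat.Coprime n' m' := Nat.coprime_div_gcd_div_gcd hgpos
  have hn'pos : 0 < n' := Nat.div_pos (Nat.le_of_dvd hn (Nat.gcd_dvd_left n m)) hgpos
  have hrows : ∀ K : Quotient s, n' ≤ (R K).card := by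
    intro K
    -- R K is nonempty
    have hne : (R K).Nonempty := by
      obtain ⟨v, rfl⟩ := Quotient.exists_rep K
      cases v with
      | inl i =>
        exact ⟨i, by rw [hR]; exact Finset.mem_filter.mpr ⟨Finset.mem_univ _, rfl⟩⟩
      | inr j =>
        have hsum : ∑ i, A i j ≠ 0 := by
          rw [hA.2.1 j]; positivity
        obtain ⟨i, _, hi⟩ := Finset.exists_ne_zero_of_sum_ne_zero hsum
        refine ⟨i, ?_⟩
        rw [hR]; simp only [Finset.mem_filter]
        exact ⟨Finset.mem_univ _, hedge i j hi⟩
    -- divisibility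
    have hdvd : n' ∣ (R K).card := by
      have h1 : (R K).card * m' * g = (C K).card * n' * g := by
        calc (R K).card * m' * g = (R K).card * m := by rw [hmm']; ring
        _ = (C K).card * n := hbal K
        _ = (C K).card * n' * g := by rw [hnn']; ring
      have h2 : (R K).card * m' = (C K).card * n' := Nat.eq_of_mul_eq_mul_right hgpos h1
      have : n' ∣ (R K).card * m' := ⟨(C K).card, by rw [h2]; ring⟩
      exact (Nat.Coprime.dvd_of_dvd_mul_right hcop) this
    exact Nat.le_of_dvd (Finset.card_pos.2 hne) hdvd
  -- sum of fibers
  have hfib : ∑ K : Quotient s, (R K).card = n := by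
    have := Finset.card_eq_sum_card_fiberwise
      (f := fun i : Fin n => (Quotient.mk'' (Sum.inl i) : Quotient s))
      (s := Finset.univ) (t := Finset.univ) (fun i _ => Finset.mem_univ _)
    simp only [Finset.card_univ, Fintype.card_fin] at this
    rw [← this]
  have : c * n' ≤ n := by
    calc c * n' = ∑ _K : Quotient s, n' := by
          rw [Finset.sum_const, Finset.card_univ, smul_eq_mul, hc, Nat.card_eq_fintype_card]
    _ ≤ ∑ K : Quotient s, (R K).card := Finset.sum_le_sum (fun K _ => hrows K)
    _ = n := hfib
  have := hnn'
  calc c = c * n' / n' := by rw [Nat.mul_div_cancel _ hn'pos]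
  _ ≤ n / n' := Nat.div_le_div_right ‹c * n' ≤ n›
  _ = g := by rw [hnn', Nat.mul_div_cancel _ hn'pos]

lemma exists_perturbation {n m : ℕ} (hn : 0 < n) (Ω : Finset (Fin n × Fin m))
    (hbig : n + m ≤ Ω.card) :
    ∃ D : Matrix (Fin n) (Fin m) ℝ, D ≠ 0 ∧
      (∀ p : Fin n × Fin m, p ∉ Ω → D p.1 p.2 = 0) ∧
      (∀ i, ∑ j, D i j = 0) ∧ (∀ j, ∑ i, D i j = 0) := by
  classical
  -- extension map
  let E : ({p // p ∈ Ω} → ℝ) →ₗ[ℝ] (Fin n × Fin m → ℝ) :=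
    { toFun := fun f p => if h : p ∈ Ω then f ⟨p, h⟩ else 0
      map_add' := by intro f g; funext p; by_cases h : p ∈ Ω <;> simp [h]
      map_smul' := by intro c f; funext p; by_cases h : p ∈ Ω <;> simp [h] }
  -- row/column sum map
  let R : (Fin n × Fin m → ℝ) →ₗ[ℝ] ((Fin n → ℝ) × (Fin m → ℝ)) :=
    { toFun := fun g => (fun i => ∑ j, g (i, j), fun j => ∑ i, g (i, j))
      map_add' := by
        intro f g
        refine Prod.ext ?_ ?_ <;> funext x <;> simp [Finset.sum_add_distrib]
      map_smul' := by
        intro c f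
        refine Prod.ext ?_ ?_ <;> funext x <;>
          simp [Finset.mul_sum, smul_eq_mul, Pi.smul_apply] }
  -- the discrepancy functional
  let φ : ((Fin n → ℝ) × (Fin m → ℝ)) →ₗ[ℝ] ℝ :=
    { toFun := fun u => (∑ i, u.1 i) - (∑ j, u.2 j)
      map_add' := by intro u v; simp [Finset.sum_add_distrib]; ring
      map_smul' := by
        intro c u
        simp only [Prod.smul_fst, Prod.smul_snd, Pi.smul_apply, smul_eq_mul,
          RingHom.id_apply]
        rw [← Finset.mul_sum, ← Finset.mul_sum]
        ring }
  let L := R.comp E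
  have hrange : LinearMap.range L ≤ LinearMap.ker φ := by
    rintro y ⟨f, rfl⟩
    simp only [LinearMap.mem_ker, LinearMap.comp_apply]
    show (∑ i, ∑ j, (E f) (i, j)) - (∑ j, ∑ i, (E f) (i, j)) = 0
    rw [Finset.sum_comm]
    ring
  -- φ is surjective
  have hφsurj : LinearMap.range φ = ⊤ := by
    rw [LinearMap.range_eq_top]
    intro y
    refine ⟨(fun _ => y / n, fun _ => 0), ?_⟩
    show (∑ _i : Fin n, y / (n:ℝ)) - (∑ _j : Fin m, (0:ℝ)) = y
    have : (n : ℝ) ≠ 0 := Nat.cast_ne_zero.mpr hn.ne'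
    simp
    field_simp
  have hkerφ : Module.finrank ℝ (LinearMap.ker φ) + 1 = n + m := by
    have h1 := LinearMap.finrank_range_add_finrank_ker φ
    rw [hφsurj] at h1
    simp only [finrank_top, Module.finrank_self] at h1
    have h2 : Module.finrank ℝ ((Fin n → ℝ) × (Fin m → ℝ)) = n + m := by
      simp [Module.finrank_prod]
    omega
  have hrankL : Module.finrank ℝ (LinearMap.range L) + Module.finrank ℝ (LinearMap.ker L)
      = Ω.card := by
    have := LinearMap.finrank_range_add_finrank_ker L
    rwa [Module.finrank_pi, Fintype.card_coe] at this
  have hrle : Module.finrank ℝ (LinearMap.range L) ≤ Module.finrank ℝ (LinearMap.ker φ) :=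
    Submodule.finrank_mono hrange
  have hker_pos : 0 < Module.finrank ℝ (LinearMap.ker L) := by omega
  haveI : Nontrivial (LinearMap.ker L) := (Module.finrank_pos_iff (R := ℝ)).1 hker_pos
  obtain ⟨⟨f, hfker⟩, hfne⟩ := exists_ne (0 : LinearMap.ker L)
  have hf0 : f ≠ 0 := by
    intro h
    apply hfne
    exact Subtype.ext h
  refine ⟨Matrix.of (fun i j => E f (i, j)), ?_, ?_, ?_, ?_⟩
  · intro h
    apply hf0
    funext q
    have := congrFun (congrFun h q.1.1) q.1.2
    simpa [E, q.2] using this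
  · intro p hp
    simp [E, hp]
  · intro i
    have := congrFun (congrArg Prod.fst (LinearMap.mem_ker.1 hfker)) i
    simpa [L, R] using this
  · intro j
    have := congrFun (congrArg Prod.snd (LinearMap.mem_ker.1 hfker)) j
    simpa [L, R] using this

lemma upper_bound {n m : ℕ} (hn : 0 < n) (hm : 0 < m)
    {A : Matrix (Fin n) (Fin m) ℝ} (hA : IsExtremal n m A)
    (Ω : Finset (Fin n × Fin m)) (hΩ : ∀ p, p ∈ Ω ↔ A p.1 p.2 ≠ 0) :
    Ω.card + 1 ≤ n + m := by
  classical
  by_contra hcon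
  push_neg at hcon
  have hbig : n + m ≤ Ω.card := by omega
  obtain ⟨D, hD0, hDsupp, hDrow, hDcol⟩ := exists_perturbation hn Ω hbig
  -- min of A over Ω
  have hΩne : Ω.Nonempty := by
    rw [← Finset.card_pos]; omega
  set δ := Ω.inf' hΩne (fun p => A p.1 p.2) with hδ
  have hδpos : 0 < δ := by
    rw [hδ, Finset.lt_inf'_iff]
    intro p hp
    exact lt_of_le_of_ne (hA.1.1 p.1 p.2) (Ne.symm ((hΩ p).1 hp))
  have hδle : ∀ p ∈ Ω, δ ≤ A p.1 p.2 := fun p hp => Finset.inf'_le _ hp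
  -- max of |D|
  haveI : Nonempty (Fin n × Fin m) := ⟨(⟨0, hn⟩, ⟨0, hm⟩)⟩
  have huniv : (Finset.univ : Finset (Fin n × Fin m)).Nonempty := Finset.univ_nonempty
  set M := Finset.univ.sup' huniv (fun p : Fin n × Fin m => |D p.1 p.2|) with hM
  have hMle : ∀ i j, |D i j| ≤ M := fun i j =>
    Finset.le_sup' (f := fun p : Fin n × Fin m => |D p.1 p.2|) (Finset.mem_univ (i, j))
  have hMpos : 0 < M := by
    obtain ⟨i, j, hij⟩ : ∃ i j, D i j ≠ 0 := by
      by_contra h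
      push_neg at h
      exact hD0 (by funext i j; exact h i j)
    exact lt_of_lt_of_le (abs_pos.2 hij) (hMle i j)
  set ε := δ / M with hε
  have hεpos : 0 < ε := div_pos hδpos hMpos
  have hbound : ∀ i j, ε * |D i j| ≤ δ := by
    intro i j
    calc ε * |D i j| ≤ ε * M := by
          exact mul_le_mul_of_nonneg_left (hMle i j) hεpos.le
    _ = δ := by rw [hε, div_mul_cancel₀ _ hMpos.ne']
  -- the two perturbed matrices
  set B := A + ε • D with hB
  set C := A - ε • D with hC
  have hentry : ∀ (σ : ℝ), |σ| ≤ 1 → ∀ i j, 0 ≤ A i j + σ * ε * D i j := by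
    intro σ hσ i j
    by_cases h : (i, j) ∈ Ω
    · have h1 : δ ≤ A i j := hδle (i, j) h
      have h2 : |σ * ε * D i j| ≤ δ := by
        rw [abs_mul, abs_mul, abs_of_pos hεpos]
        calc |σ| * ε * |D i j| = |σ| * (ε * |D i j|) := by ring
        _ ≤ 1 * (ε * |D i j|) :=
          mul_le_mul_of_nonneg_right hσ (mul_nonneg hεpos.le (abs_nonneg _))
        _ = ε * |D i j| := one_mul _
        _ ≤ δ := hbound i j
      have := (abs_le.1 h2).1
      linarith
    · have : D i j = 0 := hDsupp (i, j) h
      rw [this]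
      simpa using hA.1.1 i j
  have hBdsa : IsDSA n m B := by
    refine ⟨?_, ?_, ?_⟩
    · intro i j
      have := hentry 1 (by norm_num) i j
      simpa [hB, Matrix.add_apply, Matrix.smul_apply, smul_eq_mul] using this
    · intro j
      simp only [hB, Matrix.add_apply, Matrix.smul_apply, smul_eq_mul,
        Finset.sum_add_distrib]
      rw [hA.1.2.1 j, ← Finset.mul_sum, hDcol j]
      ring
    · intro i
      simp only [hB, Matrix.add_apply, Matrix.smul_apply, smul_eq_mul,
        Finset.sum_add_distrib]
      rw [hA.1.2.2 i, ← Finset.mul_sum, hDrow i]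
      ring
  have hCdsa : IsDSA n m C := by
    refine ⟨?_, ?_, ?_⟩
    · intro i j
      have := hentry (-1) (by norm_num) i j
      simp only [hC, Matrix.sub_apply, Matrix.smul_apply, smul_eq_mul]
      linarith
    · intro j
      simp only [hC, Matrix.sub_apply, Matrix.smul_apply, smul_eq_mul,
        Finset.sum_sub_distrib]
      rw [hA.1.2.1 j, ← Finset.mul_sum, hDcol j]
      ring
    · intro i
      simp only [hC, Matrix.sub_apply, Matrix.smul_apply, smul_eq_mul,
        Finset.sum_sub_distrib]
      rw [hA.1.2.2 i, ← Finset.mul_sum, hDrow i]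
      ring
  have hconv : A = (1/2 : ℝ) • B + (1 - 1/2 : ℝ) • C := by
    funext i j
    simp only [hB, hC, Matrix.add_apply, Matrix.sub_apply, Matrix.smul_apply,
      smul_eq_mul]
    ring
  rcases hA.2 B C (1/2) hBdsa hCdsa (by norm_num) (by norm_num) hconv with h | h
  · apply hD0
    have : ε • D = 0 := by
      have := congrArg (fun X => X - A) h
      simpa [hB] using this
    funext i j
    have := congrFun (congrFun this i) j
    simp only [Matrix.smul_apply, smul_eq_mul, Matrix.zero_apply] at this ⊢
    rcases mul_eq_zero.1 this with h' | h'
    · exact absurd h' hεpos.ne'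
    · exact h'
  · apply hD0
    have : ε • D = 0 := by
      have := congrArg (fun X => A - X) h
      simpa [hC] using this
    funext i j
    have := congrFun (congrFun this i) j
    simp only [Matrix.smul_apply, smul_eq_mul, Matrix.zero_apply] at this ⊢
    rcases mul_eq_zero.1 this with h' | h'
    · exact absurd h' hεpos.ne'
    · exact h'

end Aux

/-- The support size of any extremal `n × m` doubly stochastic array
is of the form `n + m − s` with `1 ≤ s ≤ gcd(n,m)`. -/
theorem extremal_support_size (n m : ℕ) (hn : 0 < n) (hm : 0 < m)
    (A : Matrix (Fin n) (Fin m) ℝ) (hA : IsExtremal n m A) :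
    ∃ s : ℕ, 1 ≤ s ∧ s ≤ Nat.gcd n m ∧ suppCard n m A = n + m - s := by
  classical
  set Ω : Finset (Fin n × Fin m) := Finset.univ.filter (fun p => A p.1 p.2 ≠ 0) with hΩdef
  have hΩ : ∀ p, p ∈ Ω ↔ A p.1 p.2 ≠ 0 := by intro p; simp [hΩdef]
  have hsupp : suppCard n m A = Ω.card := by
    have h : matSupp n m A = ↑Ω := by ext p; simp [matSupp, hΩdef]
    rw [suppCard, h, Set.ncard_coe_finset]
  have hup := upper_bound hn hm hA Ω hΩ
  have hlo := lower_bound hn hm hA.1 Ω hΩ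
  have hgpos : 0 < Nat.gcd n m := Nat.gcd_pos_of_pos_left m hn
  exact ⟨n + m - Ω.card, by omega, by omega, by omega⟩
end
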